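/- arXiv:1911.00513 — 7 statements merged into one kernel-verified Lean document; each statement's English description precedes it below -/
import Mathlib

section
/- For every n ≥ 1, the linear map A_{n,1/2} : ℝ^{B_n} → ℝ^{{0,1}^n} has rank 2^{n−1}, and hence its kernel has dimension |B_n| − 2^{n−1}. -/
open Finset

/-- The divide-and-color matrix `A_{n,p}`: entry at configuration `ρ` and partition `σ` is
`p^{c(σ,ρ)}(1-p)^{‖σ‖-c(σ,ρ)}` if `ρ` is constant on every block of `σ`, and `0` otherwise. -/
noncomputable def colorMatrix (n : ℕ) (p : ℝ) :
    Matrix (Fin n → Bool) (Finpartition (univ : Finset (Fin n))) ℝ :=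
  fun ρ σ =>
    if ∀ B ∈ σ.parts, ∀ i ∈ B, ∀ j ∈ B, ρ i = ρ j then
      p ^ (σ.parts.filter (fun B => ∀ i ∈ B, ρ i = true)).card *
        (1 - p) ^ (σ.parts.card - (σ.parts.filter (fun B => ∀ i ∈ B, ρ i = true)).card)
    else 0

/-- The induced linear map `A_{n,p} : ℝ^{B_n} → ℝ^{{0,1}^n}`. -/
noncomputable def colorMap (n : ℕ) (p : ℝ) :
    ((Finpartition (univ : Finset (Fin n))) → ℝ) →ₗ[ℝ] ((Fin n → Bool) → ℝ) :=
  (colorMatrix n p).mulVecLin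

lemma colorMatrix_half (n : ℕ) (ρ : Fin n → Bool) (σ : Finpartition (univ : Finset (Fin n))) :
    colorMatrix n (1/2) ρ σ =
      if ∀ B ∈ σ.parts, ∀ i ∈ B, ∀ j ∈ B, ρ i = ρ j then ((1:ℝ)/2) ^ σ.parts.card else 0 := by
  unfold colorMatrix
  split
  · have h : (σ.parts.filter (fun B => ∀ i ∈ B, ρ i = true)).card ≤ σ.parts.card :=
      Finset.card_filter_le _ _
    rw [show (1 - 1/2 : ℝ) = 1/2 by norm_num, ← pow_add, Nat.add_sub_cancel' h]
  · rfl

variable {n : ℕ}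

def flipInv (n : ℕ) : Submodule ℝ ((Fin n → Bool) → ℝ) where
  carrier := {g | ∀ ρ, g (fun i => !ρ i) = g ρ}
  add_mem' := by intro a b ha hb ρ; simp [ha ρ, hb ρ]
  zero_mem' := by intro ρ; rfl
  smul_mem' := by intro c a ha ρ; simp [ha ρ]

def partOf (ρ : Fin n → Bool) : Finpartition (univ : Finset (Fin n)) where
  parts := ((univ : Finset Bool).image (fun b => univ.filter (fun i => ρ i = b))).erase ∅
  supIndep := by
    rw [Finset.supIndep_iff_pairwiseDisjoint]
    intro B hB C hC hBC
    simp only [Finset.coe_erase, Set.mem_diff, Finset.coe_image, Set.mem_image] at hB hC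
    obtain ⟨⟨b, _, rfl⟩, -⟩ := hB
    obtain ⟨⟨c, _, rfl⟩, -⟩ := hC
    have hbc : b ≠ c := by intro h; exact hBC (by rw [h])
    refine Finset.disjoint_left.2 ?_
    intro i h1 h2
    simp only [id_eq, Finset.mem_filter] at h1 h2
    exact hbc (h1.2.symm.trans h2.2)
  sup_parts := by
    apply le_antisymm
    · exact Finset.sup_le fun B _ => Finset.subset_univ B
    · intro i _
      rw [Finset.mem_sup]
      refine ⟨univ.filter (fun j => ρ j = ρ i), ?_, by simp⟩
      rw [Finset.mem_erase]
      constructor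
      · intro h
        have : i ∈ (∅ : Finset (Fin n)) := h ▸ (by simp : i ∈ univ.filter (fun j => ρ j = ρ i))
        simp at this
      · exact Finset.mem_image.2 ⟨ρ i, Finset.mem_univ _, rfl⟩
  bot_notMem := Finset.notMem_erase _ _

lemma compat_partOf (ρ τ : Fin n → Bool) :
    (∀ B ∈ (partOf ρ).parts, ∀ i ∈ B, ∀ j ∈ B, τ i = τ j) ↔
      ∀ i j, ρ i = ρ j → τ i = τ j := by
  constructor
  · intro h i j hij
    refine h (univ.filter (fun k => ρ k = ρ i)) ?_ i (by simp) j (by simp [hij])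
    rw [partOf, Finset.mem_erase]
    constructor
    · intro hE
      have : i ∈ (∅ : Finset (Fin n)) := hE ▸ (by simp : i ∈ univ.filter (fun k => ρ k = ρ i))
      simp at this
    · exact Finset.mem_image.2 ⟨ρ i, Finset.mem_univ _, rfl⟩
  · intro h B hB i hi j hj
    rw [partOf, Finset.mem_erase, Finset.mem_image] at hB
    obtain ⟨-, b, -, rfl⟩ := hB
    rw [Finset.mem_filter] at hi hj
    exact h i j (hi.2.trans hj.2.symm)

lemma indicator_mem (σ : Finpartition (univ : Finset (Fin n))) :
    (fun τ => if ∀ B ∈ σ.parts, ∀ i ∈ B, ∀ j ∈ B, τ i = τ j then (1:ℝ) else 0)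
      ∈ LinearMap.range (colorMap n (1/2)) := by
  rw [colorMap, Matrix.range_mulVecLin]
  rw [show (colorMatrix n (1/2)).col = (colorMatrix n (1/2)).transpose from rfl]
  have hcol : (colorMatrix n (1/2)).transpose σ ∈
      Submodule.span ℝ (Set.range (colorMatrix n (1/2)).transpose) :=
    Submodule.subset_span ⟨σ, rfl⟩
  have h2 := Submodule.smul_mem _ ((2:ℝ) ^ σ.parts.card) hcol
  convert h2 using 1
  funext τ
  simp only [Matrix.transpose_apply, Pi.smul_apply, smul_eq_mul, colorMatrix_half]
  split
  · rw [← mul_pow]; norm_num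
  · simp

lemma indicator_mem' (ρ : Fin n → Bool) :
    (fun τ => if ∀ i j, ρ i = ρ j → τ i = τ j then (1:ℝ) else 0)
      ∈ LinearMap.range (colorMap n (1/2)) := by
  have h := indicator_mem (partOf ρ)
  convert h using 2 with τ
  exact if_congr (compat_partOf ρ τ).symm rfl rfl
variable {n : ℕ}

lemma pointwise_const (hn : 0 < n) (b : Bool) (τ : Fin n → Bool) :
    (if τ = (fun _ => b) then (1:ℝ) else 0) + (if τ = (fun _ => !b) then 1 else 0)
      = if ∀ i j, τ i = τ j then 1 else 0 := by
  by_cases hτ : ∀ i j, τ i = τ j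
  · have hτc : τ = fun _ => τ ⟨0, hn⟩ := funext fun i => hτ i ⟨0, hn⟩
    by_cases hb : τ ⟨0, hn⟩ = b
    · have e1 : τ = fun _ => b := by rw [hτc, hb]
      have e2 : ¬ τ = fun _ => !b := by
        intro h
        have h2 : τ ⟨0, hn⟩ = !b := congrFun h ⟨0, hn⟩
        rw [hb] at h2
        simp at h2
      rw [if_pos e1, if_neg e2, if_pos hτ]; norm_num
    · have hb' : τ ⟨0, hn⟩ = !b := by
        cases hT : τ ⟨0, hn⟩ <;> cases hB : b <;>
          first
          | rfl
          | (exfalso; rw [hT, hB] at hb; exact hb rfl)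
      have e1 : ¬ τ = fun _ => b := fun h => hb (congrFun h ⟨0, hn⟩)
      have e2 : τ = fun _ => !b := by rw [hτc, hb']
      rw [if_neg e1, if_pos e2, if_pos hτ]; norm_num
  · have e1 : ¬ τ = fun _ => b := by intro h; exact hτ fun i j => by rw [h]
    have e2 : ¬ τ = fun _ => !b := by intro h; exact hτ fun i j => by rw [h]
    rw [if_neg e1, if_neg e2, if_neg hτ]; norm_num

lemma pointwise_nonconst {ρ : Fin n → Bool} (it ifa : Fin n)
    (ht : ρ it = true) (hf : ρ ifa = false) (τ : Fin n → Bool) :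
    (if τ = ρ then (1:ℝ) else 0) + (if τ = (fun i => !ρ i) then 1 else 0)
      = (if ∀ i j, ρ i = ρ j → τ i = τ j then 1 else 0) - (if ∀ i j, τ i = τ j then 1 else 0) := by
  have hρnc : ¬ ∀ i j, ρ i = ρ j := by
    intro h; rw [h it ifa, hf] at ht; exact Bool.false_ne_true ht
  by_cases hC : ∀ i j, ρ i = ρ j → τ i = τ j
  · rw [if_pos hC]
    have hdet : ∀ i, τ i = if ρ i = true then τ it else τ ifa := by
      intro i
      cases hρi : ρ i
      · simpa using hC i ifa (by rw [hρi, hf])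
      · simpa using hC i it (by rw [hρi, ht])
    cases h1 : τ it <;> cases h2 : τ ifa
    · -- τ constant false
      have hτc : ∀ i j, τ i = τ j := by
        intro i j; rw [hdet i, hdet j]; cases ρ i <;> cases ρ j <;> simp [h1, h2]
      have e1 : ¬ τ = ρ := by intro h; rw [h] at hτc; exact hρnc hτc
      have e2 : ¬ τ = fun i => !ρ i := by
        intro h
        apply hρnc
        intro i j
        have := hτc i j
        rw [h] at this
        simpa using this
      rw [if_neg e1, if_neg e2, if_pos hτc]; norm_num
    · -- τ = flip ρ
      have hτ : τ = fun i => !ρ i := by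
        funext i; rw [hdet i]; cases hρi : ρ i <;> simp [h1, h2]
      have e1 : ¬ τ = ρ := by
        intro h; rw [h, ht] at h1; simp at h1
      have e4 : ¬ ∀ i j, τ i = τ j := by
        intro h; rw [h it ifa, h2] at h1; simp at h1
      rw [if_pos hτ, if_neg e1, if_neg e4]; norm_num
    · -- τ = ρ
      have hτ : τ = ρ := by
        funext i; rw [hdet i]; cases hρi : ρ i <;> simp [h1, h2, hρi]
      have e2 : ¬ τ = fun i => !ρ i := by
        intro h
        have := congrFun h it
        rw [h1, ht] at this
        simp at this
      have e4 : ¬ ∀ i j, τ i = τ j := by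
        intro h; rw [h it ifa, h2] at h1; simp at h1
      rw [if_pos hτ, if_neg e2, if_neg e4]; norm_num
    · -- τ constant true
      have hτc : ∀ i j, τ i = τ j := by
        intro i j; rw [hdet i, hdet j]; cases ρ i <;> cases ρ j <;> simp [h1, h2]
      have e1 : ¬ τ = ρ := by intro h; rw [h] at hτc; exact hρnc hτc
      have e2 : ¬ τ = fun i => !ρ i := by
        intro h
        apply hρnc
        intro i j
        have := hτc i j
        rw [h] at this
        simpa using this
      rw [if_neg e1, if_neg e2, if_pos hτc]; norm_num
  · have e1 : ¬ τ = ρ := by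
      intro h; exact hC fun i j hij => by rw [h]; exact hij
    have e2 : ¬ τ = fun i => !ρ i := by
      intro h; exact hC fun i j hij => by rw [h]; simp [hij]
    have e4 : ¬ ∀ i j, τ i = τ j := by
      intro h; exact hC fun i j _ => h i j
    rw [if_neg hC, if_neg e1, if_neg e2, if_neg e4]; norm_num

lemma pair_mem (hn : 0 < n) (ρ : Fin n → Bool) :
    (fun τ => (if τ = ρ then (1:ℝ) else 0) + (if τ = (fun i => !ρ i) then 1 else 0))
      ∈ LinearMap.range (colorMap n (1/2)) := by
  by_cases hc : ∀ i j, ρ i = ρ j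
  · have hρ : ρ = fun _ => ρ ⟨0, hn⟩ := funext fun i => hc i ⟨0, hn⟩
    have h1 := indicator_mem' (n := n) (fun _ => true)
    have heq : (fun τ => (if τ = ρ then (1:ℝ) else 0) + (if τ = (fun i => !ρ i) then 1 else 0))
        = fun τ => if ∀ i j, (fun _ => true) i = (fun _ => true) j → τ i = τ j then (1:ℝ) else 0 := by
      funext τ
      have := pointwise_const hn (ρ ⟨0, hn⟩) τ
      rw [← hρ] at this
      have hρ' : (fun i => !ρ i) = fun _ => !ρ ⟨0, hn⟩ := by
        funext i; rw [hc i ⟨0, hn⟩]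
      rw [← hρ'] at this
      rw [this]
      exact if_congr (by simp) rfl rfl
    rw [heq]; exact h1
  · push_neg at hc
    obtain ⟨i, j, hij⟩ := hc
    obtain ⟨it, ifa, ht, hf⟩ : ∃ it ifa, ρ it = true ∧ ρ ifa = false := by
      cases h1 : ρ i <;> cases h2 : ρ j
      · rw [h1, h2] at hij; exact absurd rfl hij
      · exact ⟨j, i, h2, h1⟩
      · exact ⟨i, j, h1, h2⟩
      · rw [h1, h2] at hij; exact absurd rfl hij
    have h1 := indicator_mem' ρ
    have h2 := indicator_mem' (n := n) (fun _ => true)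
    have h2' : (fun τ => if ∀ i j, τ i = τ j then (1:ℝ) else 0)
        ∈ LinearMap.range (colorMap n (1/2)) := by
      convert h2 using 2 with τ
      exact if_congr (by simp) rfl rfl
    have := Submodule.sub_mem _ h1 h2'
    convert this using 1
    funext τ
    exact pointwise_nonconst it ifa ht hf τ

lemma range_le_flipInv : LinearMap.range (colorMap n (1/2)) ≤ flipInv n := by
  rintro g ⟨v, rfl⟩
  intro ρ
  show ((colorMatrix n (1/2)).mulVec v) _ = ((colorMatrix n (1/2)).mulVec v) ρ
  simp only [Matrix.mulVec, dotProduct]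
  refine Finset.sum_congr rfl fun σ _ => ?_
  show colorMatrix n (1/2) (fun i => !ρ i) σ * v σ = colorMatrix n (1/2) ρ σ * v σ
  congr 1
  rw [colorMatrix_half, colorMatrix_half]
  refine if_congr ?_ rfl rfl
  constructor
  · intro h B hB i hi j hj
    have := h B hB i hi j hj
    simpa using this
  · intro h B hB i hi j hj
    rw [h B hB i hi j hj]

lemma flipInv_le_range (hn : 0 < n) : flipInv n ≤ LinearMap.range (colorMap n (1/2)) := by
  intro g hg
  have hrepr : g = (1/2 : ℝ) • ∑ ρ : Fin n → Bool, g ρ •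
      (fun τ => (if τ = ρ then (1:ℝ) else 0) + (if τ = (fun i => !ρ i) then 1 else 0)) := by
    funext τ
    simp only [Pi.smul_apply, Finset.sum_apply, Pi.add_apply, smul_eq_mul, mul_add]
    rw [Finset.sum_add_distrib]
    have key1 : ∑ ρ : Fin n → Bool, g ρ * (if τ = ρ then (1:ℝ) else 0) = g τ := by
      rw [Finset.sum_congr rfl (fun ρ _ => by rw [mul_ite, mul_one, mul_zero]),
        Finset.sum_ite_eq univ τ g, if_pos (Finset.mem_univ τ)]
    have hiff : ∀ ρ : Fin n → Bool, (τ = fun i => !ρ i) ↔ ρ = (fun i => !τ i) := by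
      intro ρ
      constructor
      · rintro rfl; funext i; simp
      · rintro rfl; funext i; simp
    have key2 : ∑ ρ : Fin n → Bool, g ρ * (if τ = (fun i => !ρ i) then (1:ℝ) else 0)
        = g (fun i => !τ i) := by
      rw [Finset.sum_congr rfl (fun ρ _ => by
        rw [if_congr (hiff ρ) rfl rfl, mul_ite, mul_one, mul_zero])]
      rw [Finset.sum_ite_eq' univ _ g, if_pos (Finset.mem_univ _)]
    rw [key1, key2, hg τ]
    ring
  rw [hrepr]
  refine Submodule.smul_mem _ _ (Submodule.sum_mem _ fun ρ _ => Submodule.smul_mem _ _ ?_)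
  exact pair_mem hn ρ

lemma finrank_flipInv (m : ℕ) : Module.finrank ℝ (flipInv (m + 1)) = 2 ^ m := by
  let φ : flipInv (m + 1) →ₗ[ℝ] ((Fin m → Bool) → ℝ) :=
    { toFun := fun g => fun σ => g.1 (Fin.cons true σ)
      map_add' := fun a b => rfl
      map_smul' := fun c a => rfl }
  have hval : ∀ (g : flipInv (m + 1)) (τ : Fin (m + 1) → Bool), τ 0 = true →
      g.1 τ = φ g (Fin.tail τ) := by
    intro g τ hτ
    show g.1 τ = g.1 (Fin.cons true (Fin.tail τ))
    rw [← hτ, Fin.cons_self_tail]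
  have hinj : Function.Injective φ := by
    rw [← LinearMap.ker_eq_bot, LinearMap.ker_eq_bot']
    intro g hgz
    ext τ
    show g.1 τ = 0
    cases hτ : τ 0
    · have hflip : (fun i => !τ i) 0 = true := by simp [hτ]
      have := hval g (fun i => !τ i) hflip
      rw [g.2 τ] at this
      rw [this, hgz]
      rfl
    · rw [hval g τ hτ, hgz]; rfl
  have hsurj : Function.Surjective φ := by
    intro h
    refine ⟨⟨fun τ => if τ 0 = true then h (Fin.tail τ) else h (Fin.tail (fun i => !τ i)), ?_⟩, ?_⟩
    · intro ρ
      cases hρ : ρ 0 <;> simp [hρ, Fin.tail, Bool.not_not]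
    · funext σ
      simp only [φ, LinearMap.coe_mk, AddHom.coe_mk]
      simp [Fin.tail_cons]
  have := (LinearEquiv.ofBijective φ ⟨hinj, hsurj⟩).finrank_eq
  rw [this, Module.finrank_pi]
  simp

/-- for `n ≥ 1`, `A_{n,1/2}` has rank `2^{n-1}` and nullity `|B_n| - 2^{n-1}`. -/
theorem rank_colorMap_half (n : ℕ) (hn : 1 ≤ n) :
    Module.finrank ℝ (LinearMap.range (colorMap n (1/2))) = 2 ^ (n - 1) ∧
    Module.finrank ℝ (LinearMap.ker (colorMap n (1/2))) =
      Fintype.card (Finpartition (univ : Finset (Fin n))) - 2 ^ (n - 1) := by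
  have hn0 : 0 < n := hn
  have hrange : LinearMap.range (colorMap n (1/2)) = flipInv n :=
    le_antisymm range_le_flipInv (flipInv_le_range hn0)
  obtain ⟨m, rfl⟩ : ∃ m, n = m + 1 := ⟨n - 1, (Nat.succ_pred_eq_of_pos hn0).symm⟩
  have hr : Module.finrank ℝ (LinearMap.range (colorMap (m+1) (1/2))) = 2 ^ m := by
    rw [hrange]; exact finrank_flipInv m
  have hsum := LinearMap.finrank_range_add_finrank_ker (colorMap (m+1) (1/2))
  rw [Module.finrank_pi, hr] at hsum
  have hm : m + 1 - 1 = m := by omega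
  exact ⟨by rw [hm, hr], by rw [hm]; omega⟩
end

section
/- Let n ≥ 1 and let ν be a probability vector on {0,1}^n satisfying ν(ρ) = ν(−ρ) for all ρ. Define q ∈ ℝ^{B_n} by: q_σ = 2(ν(0^S 1^{S^c}) + ν(1^S 0^{S^c})) if σ = {S, S^c} is a two-block partition with S ∉ {∅, [n]}; q_σ = 1 − Σ_{σ' ∈ B_n with two blocks} q_{σ'} if σ is the one-block partition {[n]}; and q_σ = 0 otherwise. Then A_{n,1/2} q = ν, i.e., q is a formal solution for ν at p = 1/2. -/
open Finset

section Aux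
variable {n : ℕ}


/-- The two-block partition `{S, Sᶜ}`. -/
def pairPartition (S : Finset (Fin n)) (h1 : S ≠ ∅) (h2 : S ≠ univ) :
    Finpartition (univ : Finset (Fin n)) where
  parts := {S, Sᶜ}
  supIndep := by
    have hne : S ≠ Sᶜ := by
      intro h
      obtain ⟨a, ha⟩ := Finset.nonempty_iff_ne_empty.2 h1
      have : a ∈ Sᶜ := h ▸ ha
      simp [Finset.mem_compl] at this
      exact this ha
    rw [Finset.supIndep_pair hne]
    exact disjoint_compl_right
  sup_parts := by
    simp [Finset.sup_insert, Finset.sup_singleton]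
  bot_notMem := by
    simp only [Finset.bot_eq_empty, Finset.mem_insert, Finset.mem_singleton]
    push_neg
    refine ⟨fun h => h1 h.symm, fun h => ?_⟩
    rw [eq_comm, Finset.compl_eq_empty_iff] at h
    exact h2 h

lemma pairPartition_parts (S : Finset (Fin n)) (h1 : S ≠ ∅) (h2 : S ≠ univ) :
    (pairPartition S h1 h2).parts = {S, Sᶜ} := rfl

lemma two_block (σ : Finpartition (univ : Finset (Fin n))) (h : σ.parts.card = 2) :
    ∃ A : Finset (Fin n), A ≠ ∅ ∧ A ≠ univ ∧ σ.parts = {A, Aᶜ} := by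
  obtain ⟨A, B, hAB, hparts⟩ := Finset.card_eq_two.1 h
  have hsup : A ⊔ B = univ := by
    have := σ.sup_parts
    rw [hparts] at this
    simpa using this
  have hdisj : Disjoint A B := by
    have := σ.supIndep
    rw [hparts, Finset.supIndep_pair hAB] at this
    exact this
  have hBA : B = Aᶜ := by
    ext x
    simp only [Finset.mem_compl]
    constructor
    · intro hx hxA
      exact (Finset.disjoint_left.1 hdisj) hxA hx
    · intro hx
      have hm : x ∈ A ∪ B := by
        rw [← Finset.sup_eq_union, hsup]; exact Finset.mem_univ x
      rcases Finset.mem_union.1 hm with h | h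
      · exact absurd h hx
      · exact h
  have hA : A ≠ ∅ := by
    intro hc
    exact σ.bot_notMem (by rw [hparts, hc]; simp)
  have hAu : A ≠ univ := by
    intro hc
    apply σ.bot_notMem
    rw [hparts, hBA, hc]
    simp
  exact ⟨A, hA, hAu, by rw [hparts, hBA]⟩

lemma one_block (σ : Finpartition (univ : Finset (Fin n))) (h : σ.parts.card = 1) :
    σ.parts = {(univ : Finset (Fin n))} := by
  obtain ⟨A, hA⟩ := Finset.card_eq_one.1 h
  have := σ.sup_parts
  rw [hA] at this
  simp at this
  rw [hA, this]

lemma colorMatrix_of_cond (ρ : Fin n → Bool) (σ : Finpartition (univ : Finset (Fin n)))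
    (h : ∀ B ∈ σ.parts, ∀ i ∈ B, ∀ j ∈ B, ρ i = ρ j) :
    colorMatrix n (1/2) ρ σ = (1/2 : ℝ) ^ σ.parts.card := by
  have hc : (σ.parts.filter (fun B => ∀ i ∈ B, ρ i = true)).card ≤ σ.parts.card :=
    Finset.card_le_card (Finset.filter_subset _ _)
  simp only [colorMatrix, if_pos h]
  rw [show (1:ℝ) - 1/2 = 1/2 by norm_num, ← pow_add, Nat.add_sub_cancel' hc]

lemma colorMatrix_of_not_cond (p : ℝ) (ρ : Fin n → Bool) (σ : Finpartition (univ : Finset (Fin n)))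
    (h : ¬ ∀ B ∈ σ.parts, ∀ i ∈ B, ∀ j ∈ B, ρ i = ρ j) :
    colorMatrix n p ρ σ = 0 := by
  simp only [colorMatrix, if_neg h]

def indicF (A : Finset (Fin n)) : Fin n → Bool := fun i => decide (i ∈ A)

def suppF (ρ : Fin n → Bool) : Finset (Fin n) := univ.filter (fun i => ρ i = true)

lemma suppF_indicF (A : Finset (Fin n)) : suppF (indicF A) = A := by
  ext i; simp [suppF, indicF]

lemma indicF_suppF (ρ : Fin n → Bool) : indicF (suppF ρ) = ρ := by
  funext i; simp [suppF, indicF]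

lemma mem_suppF {ρ : Fin n → Bool} {i : Fin n} : i ∈ suppF ρ ↔ ρ i = true := by
  simp [suppF]

lemma suppF_proper {ρ : Fin n → Bool} (h : ¬ ∀ i j : Fin n, ρ i = ρ j) :
    suppF ρ ≠ ∅ ∧ suppF ρ ≠ univ := by
  push_neg at h
  obtain ⟨i, j, hij⟩ := h
  cases hi : ρ i
  · cases hj : ρ j
    · exact absurd (hi.trans hj.symm) hij
    · constructor
      · exact Finset.nonempty_iff_ne_empty.1 ⟨j, mem_suppF.2 hj⟩
      · intro hc
        have := hc ▸ mem_suppF (ρ := ρ) (i := i)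
        simp [Finset.mem_univ, hi] at this
  · constructor
    · exact Finset.nonempty_iff_ne_empty.1 ⟨i, mem_suppF.2 hi⟩
    · cases hj : ρ j
      · intro hc
        have := hc ▸ mem_suppF (ρ := ρ) (i := j)
        simp [Finset.mem_univ, hj] at this
      · exact absurd (hi.trans hj.symm) hij

lemma cond_two_block {ρ : Fin n → Bool} {A : Finset (Fin n)}
    (hA : A ≠ ∅) (hAu : A ≠ univ)
    (hcond : ∀ B ∈ ({A, Aᶜ} : Finset (Finset (Fin n))), ∀ i ∈ B, ∀ j ∈ B, ρ i = ρ j)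
    (hnc : ¬ ∀ i j : Fin n, ρ i = ρ j) :
    suppF ρ = A ∨ suppF ρ = Aᶜ := by
  obtain ⟨a, ha⟩ := Finset.nonempty_iff_ne_empty.2 hA
  obtain ⟨b, hb⟩ : Aᶜ.Nonempty := by
    rw [Finset.nonempty_iff_ne_empty]
    intro hc
    exact hAu (by rwa [Finset.compl_eq_empty_iff] at hc)
  have hcA : ∀ i ∈ A, ρ i = ρ a :=
    fun i hi => hcond A (Finset.mem_insert_self _ _) i hi a ha
  have hcB : ∀ i ∈ Aᶜ, ρ i = ρ b :=
    fun i hi => hcond Aᶜ (Finset.mem_insert_of_mem (Finset.mem_singleton_self _)) i hi b hb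
  have hab : ρ a ≠ ρ b := by
    intro hc
    apply hnc
    intro i j
    have hv : ∀ i : Fin n, ρ i = ρ a := by
      intro i
      by_cases hi : i ∈ A
      · exact hcA i hi
      · exact (hcB i (Finset.mem_compl.2 hi)).trans hc.symm
    rw [hv i, hv j]
  cases hra : ρ a
  · right
    ext x
    rw [mem_suppF, Finset.mem_compl]
    constructor
    · intro hx hxA
      rw [hcA x hxA, hra] at hx
      exact Bool.false_ne_true hx
    · intro hx
      rw [hcB x (Finset.mem_compl.2 hx)]
      cases hrb : ρ b
      · rw [hra, hrb] at hab; exact absurd rfl hab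
      · rfl
  · left
    ext x
    rw [mem_suppF]
    constructor
    · intro hx
      by_contra hxA
      rw [hcB x (Finset.mem_compl.2 hxA)] at hx
      rw [hra, hx] at hab
      exact hab rfl
    · intro hx
      rw [hcA x hx, hra]

lemma ne_compl_self' {S : Finset (Fin n)} (h1 : S ≠ ∅) : S ≠ Sᶜ := by
  intro h
  obtain ⟨a, ha⟩ := Finset.nonempty_iff_ne_empty.2 h1
  have : a ∈ Sᶜ := h ▸ ha
  exact (Finset.mem_compl.1 this) ha

lemma pairPartition_card (S : Finset (Fin n)) (h1 : S ≠ ∅) (h2 : S ≠ univ) :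
    (pairPartition S h1 h2).parts.card = 2 := by
  rw [pairPartition_parts]
  exact Finset.card_pair (ne_compl_self' h1)

lemma compl_nonempty {S : Finset (Fin n)} (h2 : S ≠ univ) : Sᶜ.Nonempty := by
  rw [Finset.nonempty_iff_ne_empty]
  intro hc
  exact h2 (by rwa [Finset.compl_eq_empty_iff] at hc)


end Aux

/-- for a `{0,1}`-symmetric probability vector `ν` on `{0,1}^n`, the explicit
vector `q` supported on partitions with at most two blocks is a formal solution at `p = 1/2`. -/
theorem formal_solution_half (n : ℕ) (hn : 1 ≤ n) (ν : (Fin n → Bool) → ℝ)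
    (hnonneg : ∀ ρ, 0 ≤ ν ρ) (hsum : ∑ ρ, ν ρ = 1)
    (hsym : ∀ ρ : Fin n → Bool, ν ρ = ν (fun i => !(ρ i)))
    (q : Finpartition (univ : Finset (Fin n)) → ℝ)
    (hq2 : ∀ σ : Finpartition (univ : Finset (Fin n)), ∀ S : Finset (Fin n),
      S ≠ ∅ → S ≠ univ → σ.parts = {S, Sᶜ} →
      q σ = 2 * (ν (fun i => decide (i ∉ S)) + ν (fun i => decide (i ∈ S))))
    (hq1 : ∀ σ : Finpartition (univ : Finset (Fin n)), σ.parts = {(univ : Finset (Fin n))} →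
      q σ = 1 - ∑ σ' ∈ univ.filter
        (fun σ' : Finpartition (univ : Finset (Fin n)) => σ'.parts.card = 2), q σ')
    (hq0 : ∀ σ : Finpartition (univ : Finset (Fin n)),
      σ.parts.card ≠ 1 → σ.parts.card ≠ 2 → q σ = 0) :
    colorMap n (1/2) q = ν := by
  classical
  funext ρ
  have hLHS : colorMap n (1/2) q ρ = ∑ σ : Finpartition (univ : Finset (Fin n)),
      colorMatrix n (1/2) ρ σ * q σ := by
    simp [colorMap, Matrix.mulVecLin_apply, Matrix.mulVec, dotProduct]
  rw [hLHS]
  by_cases hconst : ∀ i j : Fin n, ρ i = ρ j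
  · -- constant configuration
    have i0 : Fin n := ⟨0, hn⟩
    have huniv_ne : (univ : Finset (Fin n)) ≠ ⊥ := by
      simp only [Finset.bot_eq_empty]
      exact Finset.nonempty_iff_ne_empty.1 ⟨i0, Finset.mem_univ _⟩
    set σ1 : Finpartition (univ : Finset (Fin n)) := Finpartition.indiscrete huniv_ne with hσ1
    have hσ1parts : σ1.parts = {(univ : Finset (Fin n))} := rfl
    set c0 : Fin n → Bool := fun _ => false with hc0
    set c1 : Fin n → Bool := fun _ => true with hc1
    set t2 := univ.filter (fun σ' : Finpartition (univ : Finset (Fin n)) => σ'.parts.card = 2)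
      with ht2
    set sNC := univ.filter (fun ρ' : Fin n → Bool => ¬ ∀ i j, ρ' i = ρ' j) with hsNC
    -- rewrite each entry
    have hterm : ∀ σ : Finpartition (univ : Finset (Fin n)),
        colorMatrix n (1/2) ρ σ * q σ =
          (if σ.parts.card = 1 then (1/2 : ℝ) * q σ else 0)
          + (if σ.parts.card = 2 then (1/4 : ℝ) * q σ else 0) := by
      intro σ
      have hc : ∀ B ∈ σ.parts, ∀ i ∈ B, ∀ j ∈ B, ρ i = ρ j := fun B _ i _ j _ => hconst i j
      rw [colorMatrix_of_cond ρ σ hc]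
      by_cases h1 : σ.parts.card = 1
      · rw [if_pos h1, if_neg (by omega), h1]
        norm_num
      · by_cases h2 : σ.parts.card = 2
        · rw [if_neg h1, if_pos h2, h2]
          norm_num
        · rw [if_neg h1, if_neg h2, hq0 σ h1 h2]
          simp
    rw [Finset.sum_congr rfl (fun σ _ => hterm σ), Finset.sum_add_distrib,
      ← Finset.sum_filter, ← Finset.sum_filter]
    have ht1 : univ.filter
        (fun σ : Finpartition (univ : Finset (Fin n)) => σ.parts.card = 1) = {σ1} := by
      ext σ
      simp only [Finset.mem_filter, Finset.mem_univ, true_and, Finset.mem_singleton]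
      constructor
      · intro h
        exact Finpartition.ext ((one_block σ h).trans hσ1parts.symm)
      · rintro rfl
        rw [hσ1parts]
        exact Finset.card_singleton _
    rw [ht1, Finset.sum_singleton]
    -- the fiber map
    set g : (Fin n → Bool) → Finpartition (univ : Finset (Fin n)) := fun ρ' =>
      if h : suppF ρ' ≠ ∅ ∧ suppF ρ' ≠ univ then pairPartition _ h.1 h.2 else σ1 with hg
    have hgA : ∀ (S : Finset (Fin n)) (hS1 : S ≠ ∅) (hS2 : S ≠ univ),
        g (indicF S) = pairPartition S hS1 hS2 := by
      intro S hS1 hS2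
      rw [hg]
      simp only [suppF_indicF]
      rw [dif_pos ⟨hS1, hS2⟩]
    have hmaps : ∀ ρ' ∈ sNC, g ρ' ∈ t2 := by
      intro ρ' hρ'
      rw [hsNC, Finset.mem_filter] at hρ'
      obtain ⟨hn1, hn2⟩ := suppF_proper hρ'.2
      rw [ht2, Finset.mem_filter]
      refine ⟨Finset.mem_univ _, ?_⟩
      rw [hg]
      simp only
      rw [dif_pos ⟨hn1, hn2⟩]
      exact pairPartition_card _ _ _
    have hfiber : ∀ σ ∈ t2, ∑ ρ' ∈ sNC.filter (fun ρ' => g ρ' = σ), 2 * ν ρ' = q σ := by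
      intro σ hσ
      rw [ht2, Finset.mem_filter] at hσ
      obtain ⟨A, hA, hAu, hparts⟩ := two_block σ hσ.2
      obtain ⟨a, ha⟩ := Finset.nonempty_iff_ne_empty.2 hA
      obtain ⟨b, hb⟩ := compl_nonempty hAu
      have hAc : Aᶜ ≠ ∅ := Finset.nonempty_iff_ne_empty.1 ⟨b, hb⟩
      have hAcu : Aᶜ ≠ univ := by
        intro hcu
        have : a ∈ Aᶜ := hcu ▸ Finset.mem_univ a
        exact (Finset.mem_compl.1 this) ha
      have hfib_eq : sNC.filter (fun ρ' => g ρ' = σ) = {indicF A, indicF Aᶜ} := by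
        ext ρ'
        rw [Finset.mem_filter, hsNC, Finset.mem_filter]
        simp only [Finset.mem_univ, true_and, Finset.mem_insert, Finset.mem_singleton]
        constructor
        · rintro ⟨hnc, hgρ⟩
          obtain ⟨hn1, hn2⟩ := suppF_proper hnc
          rw [hg] at hgρ
          simp only at hgρ
          rw [dif_pos ⟨hn1, hn2⟩] at hgρ
          have hmem : suppF ρ' ∈ σ.parts := by
            rw [← hgρ, pairPartition_parts]
            exact Finset.mem_insert_self _ _
          rw [hparts] at hmem
          rcases Finset.mem_insert.1 hmem with h | h
          · left
            rw [← indicF_suppF ρ', h]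
          · right
            rw [← indicF_suppF ρ', Finset.mem_singleton.1 h]
        · have hbA : b ∉ A := Finset.mem_compl.1 hb
          have haAc : a ∉ Aᶜ := fun hc => (Finset.mem_compl.1 hc) ha
          rintro (rfl | rfl)
          · constructor
            · intro hall
              have := hall a b
              simp [indicF, ha, hbA] at this
            · rw [hgA A hA hAu]
              apply Finpartition.ext
              rw [pairPartition_parts, hparts]
          · constructor
            · intro hall
              have := hall a b
              simp [indicF, hb, haAc] at this
            · rw [hgA Aᶜ hAc hAcu]
              apply Finpartition.ext
              rw [pairPartition_parts, hparts, compl_compl]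
              exact (Finset.pair_comm A Aᶜ).symm ▸ Finset.pair_comm Aᶜ A
      have hne : indicF A ≠ indicF Aᶜ := by
        intro h
        have := congrFun h a
        simp [indicF, ha, fun hc => (Finset.mem_compl.1 hc) ha] at this
      rw [hfib_eq, Finset.sum_pair hne, hq2 σ A hA hAu hparts]
      have e1 : indicF Aᶜ = (fun i => decide (i ∉ A)) := by
        funext i
        simp [indicF, Finset.mem_compl]
      have e2 : indicF A = (fun i => decide (i ∈ A)) := rfl
      rw [e1, e2]
      ring
    have key : ∑ σ ∈ t2, q σ = ∑ ρ' ∈ sNC, 2 * ν ρ' := by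
      rw [← Finset.sum_fiberwise_of_maps_to hmaps (fun ρ' => 2 * ν ρ')]
      exact Finset.sum_congr rfl fun σ h => (hfiber σ h).symm
    -- evaluate the nonconstant mass
    have hν1 : ν c1 = ν c0 := by
      rw [hsym c1]
      congr 1
    have hsplitν : ∑ ρ' ∈ sNC, ν ρ' = 1 - 2 * ν c0 := by
      have hfc : univ.filter (fun ρ' : Fin n → Bool => ∀ i j, ρ' i = ρ' j) = {c0, c1} := by
        ext ρ'
        simp only [Finset.mem_filter, Finset.mem_univ, true_and, Finset.mem_insert,
          Finset.mem_singleton]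
        constructor
        · intro h
          cases hv : ρ' i0
          · left
            funext i
            rw [h i i0, hv]
          · right
            funext i
            rw [h i i0, hv]
        · rintro (rfl | rfl) i j <;> rfl
      have hc01 : c0 ≠ c1 := by
        intro h
        have := congrFun h i0
        simp [hc0, hc1] at this
      have hsplit := Finset.sum_filter_add_sum_filter_not univ
        (fun ρ' : Fin n → Bool => ∀ i j, ρ' i = ρ' j) ν
      rw [hfc, Finset.sum_pair hc01, hν1, hsum] at hsplit
      rw [hsNC]
      linarith
    have hT : ∑ σ ∈ t2, q σ = 2 * (1 - 2 * ν c0) := by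
      rw [key, ← Finset.mul_sum, hsplitν]
    have hq1' : q σ1 = 1 - ∑ σ' ∈ t2, q σ' := hq1 σ1 hσ1parts
    have hρν : ν ρ = ν c0 := by
      cases hv : ρ i0
      · have : ρ = c0 := by
          funext i
          rw [hconst i i0, hv]
        rw [this]
      · have : ρ = c1 := by
          funext i
          rw [hconst i i0, hv]
        rw [this, hν1]
    rw [← Finset.mul_sum, hq1', hT, hρν]
    ring
  · obtain ⟨h1, h2⟩ := suppF_proper hconst
    refine (Finset.sum_eq_single (pairPartition (suppF ρ) h1 h2) ?_ ?_).trans ?_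
    · intro σ _ hne
      by_cases h1' : σ.parts.card = 1
      · have hp := one_block σ h1'
        have hnc : ¬ ∀ B ∈ σ.parts, ∀ i ∈ B, ∀ j ∈ B, ρ i = ρ j := by
          intro hc
          exact hconst fun i j =>
            hc univ (hp ▸ Finset.mem_singleton_self _) i (mem_univ i) j (mem_univ j)
        rw [colorMatrix_of_not_cond _ _ _ hnc, zero_mul]
      · by_cases h2' : σ.parts.card = 2
        · obtain ⟨A, hA, hAu, hparts⟩ := two_block σ h2'
          have hnc : ¬ ∀ B ∈ σ.parts, ∀ i ∈ B, ∀ j ∈ B, ρ i = ρ j := by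
            intro hc
            rw [hparts] at hc
            rcases cond_two_block hA hAu hc hconst with hS | hS
            · apply hne
              apply Finpartition.ext
              rw [hparts, pairPartition_parts, hS]
            · apply hne
              apply Finpartition.ext
              rw [hparts, pairPartition_parts, hS, compl_compl]
              exact Finset.pair_comm A Aᶜ
          rw [colorMatrix_of_not_cond _ _ _ hnc, zero_mul]
        · rw [hq0 σ h1' h2', mul_zero]
    · intro h
      exact absurd (Finset.mem_univ _) h
    · have hcond : ∀ B ∈ (pairPartition (suppF ρ) h1 h2).parts,
          ∀ i ∈ B, ∀ j ∈ B, ρ i = ρ j := by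
        intro B hB i hi j hj
        rw [pairPartition_parts] at hB
        rcases Finset.mem_insert.1 hB with rfl | hB
        · rw [mem_suppF.1 hi, mem_suppF.1 hj]
        · rw [Finset.mem_singleton.1 hB] at hi hj
          have hi' : ρ i = false := by
            cases h : ρ i
            · rfl
            · exact absurd (mem_suppF.2 h) (Finset.mem_compl.1 hi)
          have hj' : ρ j = false := by
            cases h : ρ j
            · rfl
            · exact absurd (mem_suppF.2 h) (Finset.mem_compl.1 hj)
          rw [hi', hj']
      rw [colorMatrix_of_cond ρ _ hcond, pairPartition_card,
        hq2 _ (suppF ρ) h1 h2 (pairPartition_parts _ _ _)]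
      have e1 : (fun i => decide (i ∉ suppF ρ)) = fun i => !(ρ i) := by
        funext i
        cases h : ρ i <;> simp [suppF, h]
      have e2 : (fun i => decide (i ∈ suppF ρ)) = ρ := by
        funext i
        simp [suppF]
      rw [e1, e2, ← hsym ρ]
      ring
end

section
/- For every n ≥ 1 and every p ∈ (0,1) with p ≠ 1/2, the linear map A_{n,p} : ℝ^{B_n} → ℝ^{{0,1}^n} has rank 2^n − n, and hence its kernel has dimension |B_n| − (2^n − n). -/
open Finset

/-- Fourier-type function. -/
noncomputable def chi (n : ℕ) (p : ℝ) (T : Finset (Fin n)) : (Fin n → Bool) → ℝ :=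
  fun ρ => ∏ i ∈ T, ((if ρ i then (1:ℝ) else 0) - p)

/-- the moment `E[(X-p)^k]`, `X ~ Bern(p)`. -/
noncomputable def mm (p : ℝ) (k : ℕ) : ℝ := p * (1-p)^k + (1-p) * (-p)^k

lemma mm_zero (p : ℝ) : mm p 0 = 1 := by simp [mm]

lemma mm_one (p : ℝ) : mm p 1 = 0 := by simp [mm]; ring

lemma mm_ne_zero {p : ℝ} (hp : p ∈ Set.Ioo (0:ℝ) 1) (hp' : p ≠ 1/2) {k : ℕ} (hk : k ≠ 1) :
    mm p k ≠ 0 := by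
  obtain ⟨hp0, hp1⟩ := hp
  have h1p : 0 < 1 - p := by linarith
  rcases Nat.eq_zero_or_pos k with rfl | hkpos
  · simp [mm]
  obtain ⟨m, rfl⟩ : ∃ m, k = m + 1 := ⟨k - 1, (Nat.succ_pred_eq_of_pos hkpos).symm⟩
  have hm : m ≠ 0 := by rintro rfl; exact hk rfl
  rcases Nat.even_or_odd (m + 1) with he | ho
  · have hpe : (-p) ^ (m+1) = p ^ (m+1) := he.neg_pow p
    rw [mm, hpe]
    positivity
  · have hpo : (-p) ^ (m+1) = -(p ^ (m+1)) := ho.neg_pow p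
    rw [mm, hpo]
    intro h
    have h2 : p * (1 - p) * ((1 - p) ^ m - p ^ m) = 0 := by linear_combination h
    have h3 : (1 - p) ^ m = p ^ m := by
      have hne : p * (1 - p) ≠ 0 := by positivity
      have := (mul_eq_zero.1 h2).resolve_left hne
      linarith
    have h4 : 1 - p = p := (pow_left_inj₀ (by linarith) (by linarith) hm).1 h3
    apply hp'
    linarith

/-- The key pairing identity. -/
lemma pairing (n : ℕ) (p : ℝ) (σ : Finpartition (univ : Finset (Fin n)))
    (T : Finset (Fin n)) :
    ∑ ρ : Fin n → Bool, chi n p T ρ * colorMatrix n p ρ σ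
      = ∏ B ∈ σ.parts, mm p (B ∩ T).card := by
  classical
  have wform : ∀ ρ : Fin n → Bool,
      (∀ B ∈ σ.parts, ∀ i ∈ B, ∀ j ∈ B, ρ i = ρ j) →
      colorMatrix n p ρ σ
        = ∏ B ∈ σ.parts, (if ∀ i ∈ B, ρ i = true then p else 1 - p) := by
    intro ρ h
    have hcard : (σ.parts.filter (fun B => ¬ ∀ i ∈ B, ρ i = true)).card
        = σ.parts.card - (σ.parts.filter (fun B => ∀ i ∈ B, ρ i = true)).card := by
      have := Finset.card_filter_add_card_filter_not
        (s := σ.parts) (p := fun B => ∀ i ∈ B, ρ i = true)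
      omega
    rw [colorMatrix, if_pos h, Finset.prod_ite, Finset.prod_const, Finset.prod_const, hcard]
  have step1 : ∑ ρ : Fin n → Bool, chi n p T ρ * colorMatrix n p ρ σ
      = ∑ ρ ∈ Finset.univ.filter (fun ρ : Fin n → Bool =>
          ∀ B ∈ σ.parts, ∀ i ∈ B, ∀ j ∈ B, ρ i = ρ j),
          chi n p T ρ * ∏ B ∈ σ.parts, (if ∀ i ∈ B, ρ i = true then p else 1 - p) := by
    rw [Finset.sum_filter]
    refine Finset.sum_congr rfl fun ρ _ => ?_
    by_cases h : ∀ B ∈ σ.parts, ∀ i ∈ B, ∀ j ∈ B, ρ i = ρ j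
    · rw [if_pos h, wform ρ h]
    · rw [if_neg h, colorMatrix, if_neg h, mul_zero]
  have step2 : ∑ ρ ∈ Finset.univ.filter (fun ρ : Fin n → Bool =>
          ∀ B ∈ σ.parts, ∀ i ∈ B, ∀ j ∈ B, ρ i = ρ j),
          chi n p T ρ * ∏ B ∈ σ.parts, (if ∀ i ∈ B, ρ i = true then p else 1 - p)
      = ∑ η : {B // B ∈ σ.parts} → Bool, ∏ B : {B // B ∈ σ.parts},
          ((if η B then p else 1 - p) *
            ((if η B then (1:ℝ) else 0) - p) ^ (B.1 ∩ T).card) := by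
    refine Finset.sum_bij'
      (i := fun ρ _ => fun B : {B // B ∈ σ.parts} =>
        ρ (B.1.min' (σ.nonempty_of_mem_parts B.2)))
      (j := fun η _ => fun k : Fin n => η ⟨σ.part k, σ.part_mem.2 (mem_univ k)⟩)
      (fun _ _ => mem_univ _) ?_ ?_ ?_ ?_
    · intro η _
      simp only [Finset.mem_filter, Finset.mem_univ, true_and]
      intro B hB i hi j hj
      have h1 : σ.part i = B := σ.part_eq_of_mem hB hi
      have h2 : σ.part j = B := σ.part_eq_of_mem hB hj
      congr 1
      exact Subtype.ext (h1.trans h2.symm)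
    · intro ρ hρ
      have hC := (Finset.mem_filter.1 hρ).2
      funext k
      exact hC (σ.part k) (σ.part_mem.2 (mem_univ k))
        ((σ.part k).min' (σ.nonempty_of_mem_parts (σ.part_mem.2 (mem_univ k))))
        (Finset.min'_mem _ _) k (σ.mem_part (mem_univ k))
    · intro η _
      funext B
      exact congrArg η (Subtype.ext (σ.part_eq_of_mem B.2 (Finset.min'_mem _ _)))
    · intro ρ hρ
      have hC := (Finset.mem_filter.1 hρ).2
      have ha : chi n p T ρ = ∏ B ∈ σ.parts.attach,
          ((if ρ (B.1.min' (σ.nonempty_of_mem_parts B.2)) then (1:ℝ) else 0) - p)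
            ^ (B.1 ∩ T).card := by
        have hT : σ.parts.attach.biUnion (fun B => B.1 ∩ T) = T := by
          ext k
          simp only [Finset.mem_biUnion, Finset.mem_inter, Finset.mem_attach, true_and]
          constructor
          · rintro ⟨B, _, hkT⟩; exact hkT
          · intro hk
            exact ⟨⟨σ.part k, σ.part_mem.2 (mem_univ k)⟩, σ.mem_part (mem_univ k), hk⟩
        have hdisj : (↑σ.parts.attach : Set _).PairwiseDisjoint
            (fun B : {B // B ∈ σ.parts} => B.1 ∩ T) := by
          intro a _ b _ hab
          exact ((σ.disjoint a.2 b.2 (fun h => hab (Subtype.ext h))).mono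
            Finset.inter_subset_left Finset.inter_subset_left)
        rw [chi]
        conv_lhs => rw [← hT]
        rw [Finset.prod_biUnion hdisj]
        refine Finset.prod_congr rfl fun B _ => ?_
        calc ∏ i ∈ B.1 ∩ T, ((if ρ i then (1:ℝ) else 0) - p)
            = ∏ _i ∈ B.1 ∩ T,
              ((if ρ (B.1.min' (σ.nonempty_of_mem_parts B.2)) then (1:ℝ) else 0) - p) := by
              refine Finset.prod_congr rfl fun i hi => ?_
              rw [hC B.1 B.2 i (Finset.mem_of_mem_inter_left hi) _ (Finset.min'_mem _ _)]
          _ = _ := Finset.prod_const _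
      have hb : (∏ B ∈ σ.parts, (if ∀ i ∈ B, ρ i = true then p else 1 - p))
          = ∏ B ∈ σ.parts.attach,
            (if ρ (B.1.min' (σ.nonempty_of_mem_parts B.2)) then p else 1 - p) := by
        rw [← Finset.prod_attach σ.parts (fun B => if ∀ i ∈ B, ρ i = true then p else 1 - p)]
        refine Finset.prod_congr rfl fun B _ => ?_
        have hrep : B.1.min' (σ.nonempty_of_mem_parts B.2) ∈ B.1 := Finset.min'_mem _ _
        by_cases hbv : ρ (B.1.min' (σ.nonempty_of_mem_parts B.2)) = true
        · rw [if_pos (fun i hi => (hC B.1 B.2 i hi _ hrep).trans hbv), if_pos hbv]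
        · rw [if_neg (fun hall => hbv (hall _ hrep)), if_neg hbv]
      rw [ha, hb, ← Finset.prod_mul_distrib, Finset.univ_eq_attach]
      exact Finset.prod_congr rfl fun B _ => (mul_comm _ _)
  have step3 : (∑ η : {B // B ∈ σ.parts} → Bool, ∏ B : {B // B ∈ σ.parts},
          ((if η B then p else 1 - p) *
            ((if η B then (1:ℝ) else 0) - p) ^ (B.1 ∩ T).card))
      = ∏ B ∈ σ.parts, mm p (B ∩ T).card := by
    have := Finset.sum_prod_piFinset (ι := {B // B ∈ σ.parts}) (univ : Finset Bool)
      (fun B b => (if b then p else 1 - p) * ((if b then (1:ℝ) else 0) - p) ^ (B.1 ∩ T).card)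
    rw [Fintype.piFinset_univ] at this
    rw [this, ← Finset.prod_attach σ.parts (fun B => mm p (B ∩ T).card),
      Finset.univ_eq_attach]
    refine Finset.prod_congr rfl fun B _ => ?_
    simp [mm]
  rw [step1, step2, step3]

/-- Parts of the special partition: the block `S` together with singletons outside `S`. -/
def ptparts (n : ℕ) (S : Finset (Fin n)) : Finset (Finset (Fin n)) :=
  (insert S ((univ \ S).image fun j => ({j} : Finset (Fin n)))).erase ∅

lemma mem_ptparts {n : ℕ} {S B : Finset (Fin n)} :
    B ∈ ptparts n S ↔ B ≠ ∅ ∧ (B = S ∨ ∃ j, j ∉ S ∧ B = {j}) := by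
  simp only [ptparts, Finset.mem_erase, Finset.mem_insert, Finset.mem_image,
    Finset.mem_sdiff, Finset.mem_univ, true_and]
  constructor
  · rintro ⟨hne, h | ⟨j, hj, rfl⟩⟩
    · exact ⟨hne, Or.inl h⟩
    · exact ⟨hne, Or.inr ⟨j, hj, rfl⟩⟩
  · rintro ⟨hne, h | ⟨j, hj, rfl⟩⟩
    · exact ⟨hne, Or.inl h⟩
    · exact ⟨hne, Or.inr ⟨j, hj, rfl⟩⟩

/-- The special partition: block `S` plus singletons outside of `S`. -/
def pt (n : ℕ) (S : Finset (Fin n)) : Finpartition (univ : Finset (Fin n)) where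
  parts := ptparts n S
  supIndep := by
    rw [Finset.supIndep_iff_pairwiseDisjoint]
    intro a ha b hb hab
    obtain ⟨-, ha'⟩ := mem_ptparts.1 ha
    obtain ⟨-, hb'⟩ := mem_ptparts.1 hb
    simp only [Function.onFun, id_eq]
    rw [Finset.disjoint_left]
    intro x hxa hxb
    rcases ha' with rfl | ⟨j, hj, rfl⟩ <;> rcases hb' with rfl | ⟨k, hk, rfl⟩
    · exact hab rfl
    · exact hk ((Finset.mem_singleton.1 hxb) ▸ hxa)
    · exact hj ((Finset.mem_singleton.1 hxa) ▸ hxb)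
    · exact hab (by rw [← Finset.mem_singleton.1 hxa, Finset.mem_singleton.1 hxb])
  sup_parts := by
    refine le_antisymm (Finset.sup_le fun B _ => Finset.subset_univ B) fun i _ => ?_
    rw [Finset.mem_sup]
    by_cases hiS : i ∈ S
    · exact ⟨S, mem_ptparts.2 ⟨Finset.ne_empty_of_mem hiS, Or.inl rfl⟩, hiS⟩
    · exact ⟨{i}, mem_ptparts.2 ⟨Finset.singleton_ne_empty i, Or.inr ⟨i, hiS, rfl⟩⟩,
        Finset.mem_singleton_self i⟩
  bot_notMem := by
    intro h
    exact (mem_ptparts.1 h).1 rfl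

lemma pt_parts (n : ℕ) (S : Finset (Fin n)) : (pt n S).parts = ptparts n S := rfl

lemma prod_pt_not_subset {n : ℕ} (p : ℝ) {S T : Finset (Fin n)} (h : ¬ T ⊆ S) :
    ∏ B ∈ (pt n S).parts, mm p (B ∩ T).card = 0 := by
  obtain ⟨j, hjT, hjS⟩ := Finset.not_subset.1 h
  refine Finset.prod_eq_zero
    (mem_ptparts.2 ⟨Finset.singleton_ne_empty j, Or.inr ⟨j, hjS, rfl⟩⟩) ?_
  rw [Finset.singleton_inter_of_mem hjT, Finset.card_singleton, mm_one]

lemma prod_pt_self_ne_zero {n : ℕ} {p : ℝ} (hp : p ∈ Set.Ioo (0:ℝ) 1) (hp' : p ≠ 1/2)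
    {S : Finset (Fin n)} (hS : S.card ≠ 1) :
    ∏ B ∈ (pt n S).parts, mm p (B ∩ S).card ≠ 0 := by
  rw [Finset.prod_ne_zero_iff]
  intro B hB
  obtain ⟨-, h | ⟨j, hj, rfl⟩⟩ := mem_ptparts.1 hB
  · subst h
    rw [Finset.inter_self]
    exact mm_ne_zero hp hp' hS
  · rw [Finset.singleton_inter_of_notMem hj, Finset.card_empty, mm_zero]
    exact one_ne_zero

/-- Single-coordinate functions pair to zero with every column. -/
lemma colsum (n : ℕ) (p : ℝ) (i : Fin n) (σ : Finpartition (univ : Finset (Fin n))) :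
    ∑ ρ : Fin n → Bool, chi n p {i} ρ * colorMatrix n p ρ σ = 0 := by
  rw [pairing]
  refine Finset.prod_eq_zero (σ.part_mem.2 (mem_univ i)) ?_
  rw [Finset.inter_singleton_of_mem (σ.mem_part (mem_univ i)), Finset.card_singleton, mm_one]

/-- for `n ≥ 1` and `p ∈ (0,1)` with `p ≠ 1/2`, `A_{n,p}` has rank `2^n - n`
and nullity `|B_n| - (2^n - n)`. -/
theorem rank_colorMap (n : ℕ) (hn : 1 ≤ n) (p : ℝ) (hp : p ∈ Set.Ioo (0:ℝ) 1)
    (hp' : p ≠ 1/2) :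
    Module.finrank ℝ (LinearMap.range (colorMap n p)) = 2 ^ n - n ∧
    Module.finrank ℝ (LinearMap.ker (colorMap n p)) =
      Fintype.card (Finpartition (univ : Finset (Fin n))) - (2 ^ n - n) := by
  classical
  -- the test-functional map
  set N : Matrix (Fin n) (Fin n → Bool) ℝ := fun i ρ => chi n p {i} ρ with hN
  set Φ : ((Fin n → Bool) → ℝ) →ₗ[ℝ] (Fin n → ℝ) := N.mulVecLin with hΦ
  have hΦ_apply : ∀ (g : (Fin n → Bool) → ℝ) (i : Fin n),
      Φ g i = ∑ ρ : Fin n → Bool, chi n p {i} ρ * g ρ := by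
    intro g i; rfl
  -- upper bound : range ≤ ker Φ
  have hle : LinearMap.range (colorMap n p) ≤ LinearMap.ker Φ := by
    rintro _ ⟨x, rfl⟩
    rw [LinearMap.mem_ker]
    funext i
    have h1 : Φ (colorMap n p x) i
        = ∑ ρ : Fin n → Bool, chi n p {i} ρ * ∑ σ, colorMatrix n p ρ σ * x σ := rfl
    rw [h1]
    have h2 : ∀ ρ : Fin n → Bool, chi n p {i} ρ * ∑ σ, colorMatrix n p ρ σ * x σ
        = ∑ σ, chi n p {i} ρ * colorMatrix n p ρ σ * x σ := by
      intro ρ; rw [Finset.mul_sum]; exact Finset.sum_congr rfl fun σ _ => by ring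
    simp_rw [h2]
    rw [Finset.sum_comm]
    have h3 : ∀ σ, ∑ ρ : Fin n → Bool, chi n p {i} ρ * colorMatrix n p ρ σ * x σ = 0 := by
      intro σ
      rw [← Finset.sum_mul, colsum, zero_mul]
    simp_rw [h3]
    simp
  -- Φ is surjective
  have hchi_single : ∀ (ρ : Fin n → Bool) (i : Fin n),
      chi n p {i} ρ = (if ρ i then (1:ℝ) else 0) - p := by
    intro ρ i; rw [chi, Finset.prod_singleton]
  have hsurj : Function.Surjective Φ := by
    intro y
    refine ⟨∑ j : Fin n, y j •
      (Pi.single (fun k => decide (k = j)) 1 - Pi.single (fun _ => false) 1), ?_⟩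
    funext i
    rw [map_sum]
    simp only [map_smul, map_sub, Finset.sum_apply, Pi.smul_apply, Pi.sub_apply, smul_eq_mul]
    have hsingle : ∀ (ρ0 : Fin n → Bool) (i : Fin n),
        Φ (Pi.single ρ0 1) i = chi n p {i} ρ0 := by
      intro ρ0 i
      rw [hΦ_apply]
      rw [Finset.sum_eq_single ρ0]
      · simp
      · intro b _ hb; simp [Pi.single_apply, hb]
      · intro h; exact absurd (Finset.mem_univ _) h
    have : ∀ j : Fin n, Φ (Pi.single (fun k => decide (k = j)) 1) i
        - Φ (Pi.single (fun _ => false) 1) i = if i = j then 1 else 0 := by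
      intro j
      rw [hsingle, hsingle, hchi_single, hchi_single]
      by_cases h : i = j <;> simp [h]
    simp_rw [this]
    simp
  -- finrank of ker Φ
  have hrnΦ := LinearMap.finrank_range_add_finrank_ker Φ
  rw [LinearMap.range_eq_top.2 hsurj] at hrnΦ
  have hdim1 : Module.finrank ℝ ((Fin n → Bool) → ℝ) = 2 ^ n := by
    rw [Module.finrank_fintype_fun_eq_card, Fintype.card_fun]
    simp
  have hdim2 : Module.finrank ℝ (⊤ : Submodule ℝ (Fin n → ℝ)) = n := by
    rw [finrank_top, Module.finrank_fintype_fun_eq_card, Fintype.card_fin]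
  rw [hdim1, hdim2] at hrnΦ
  have hkerΦ : Module.finrank ℝ (LinearMap.ker Φ) = 2 ^ n - n := by omega
  have hub : Module.finrank ℝ (LinearMap.range (colorMap n p)) ≤ 2 ^ n - n := by
    rw [← hkerΦ]
    exact Submodule.finrank_mono hle
  -- lower bound: linearly independent columns
  set v : {S : Finset (Fin n) // ¬ S.card = 1} → ((Fin n → Bool) → ℝ) :=
    fun S => fun ρ => colorMatrix n p ρ (pt n S.1) with hv
  have hv_mem : ∀ S, v S ∈ LinearMap.range (colorMap n p) := by
    intro S
    refine ⟨Pi.single (pt n S.1) 1, ?_⟩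
    rw [colorMap, Matrix.mulVecLin_apply, Matrix.mulVec_single_one]
    rfl
  have hv_li : LinearIndependent ℝ v := by
    rw [Fintype.linearIndependent_iff]
    intro g hg
    have hpair : ∀ T : {S : Finset (Fin n) // ¬ S.card = 1},
        ∑ S : {S : Finset (Fin n) // ¬ S.card = 1},
          g S * ∏ B ∈ (pt n S.1).parts, mm p (B ∩ T.1).card = 0 := by
      intro T
      have h0 : ∀ ρ : Fin n → Bool,
          ∑ S : {S : Finset (Fin n) // ¬ S.card = 1},
            g S * colorMatrix n p ρ (pt n S.1) = 0 := by
        intro ρ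
        have := congrFun hg ρ
        simpa [hv] using this
      calc ∑ S : {S : Finset (Fin n) // ¬ S.card = 1},
            g S * ∏ B ∈ (pt n S.1).parts, mm p (B ∩ T.1).card
          = ∑ S : {S : Finset (Fin n) // ¬ S.card = 1},
            g S * ∑ ρ : Fin n → Bool, chi n p T.1 ρ * colorMatrix n p ρ (pt n S.1) := by
            simp_rw [pairing]
        _ = ∑ ρ : Fin n → Bool, chi n p T.1 ρ *
            ∑ S : {S : Finset (Fin n) // ¬ S.card = 1},
              g S * colorMatrix n p ρ (pt n S.1) := by
            simp_rw [Finset.mul_sum]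
            rw [Finset.sum_comm]
            exact Finset.sum_congr rfl fun ρ _ =>
              Finset.sum_congr rfl fun S _ => by ring
        _ = 0 := by simp_rw [h0]; simp
    intro S0
    suffices H : ∀ k, ∀ S : {S : Finset (Fin n) // ¬ S.card = 1},
        n - S.1.card = k → g S = 0 from H _ S0 rfl
    intro k
    induction k using Nat.strong_induction_on with
    | _ k IH =>
      intro S hk
      have heq := hpair S
      rw [Finset.sum_eq_single S] at heq
      · rcases mul_eq_zero.1 heq with h | h
        · exact h
        · exact absurd h (prod_pt_self_ne_zero hp hp' S.2)
      · intro S' _ hne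
        by_cases hsub : S.1 ⊆ S'.1
        · have hssub : S.1 ⊂ S'.1 :=
            Finset.ssubset_iff_subset_ne.2 ⟨hsub, fun h => hne (Subtype.ext h.symm)⟩
          have hlt : S.1.card < S'.1.card := Finset.card_lt_card hssub
          have hle' : S'.1.card ≤ n := by
            have := Finset.card_le_univ S'.1
            simpa using this
          have : g S' = 0 := IH (n - S'.1.card) (by omega) S' rfl
          rw [this, zero_mul]
        · rw [prod_pt_not_subset p hsub, mul_zero]
      · intro h; exact absurd (Finset.mem_univ _) h
  have hcard : Fintype.card {S : Finset (Fin n) // ¬ S.card = 1} = 2 ^ n - n := by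
    rw [Fintype.card_subtype]
    have h1 : (univ.filter fun S : Finset (Fin n) => S.card = 1)
        = univ.image (fun i : Fin n => ({i} : Finset (Fin n))) := by
      ext S
      simp [Finset.card_eq_one, eq_comm]
    have h2 : (univ.filter fun S : Finset (Fin n) => S.card = 1).card = n := by
      rw [h1, Finset.card_image_of_injective _ (fun a b h => by simpa using h),
        Finset.card_univ, Fintype.card_fin]
    have h3 := Finset.card_filter_add_card_filter_not
      (s := (univ : Finset (Finset (Fin n)))) (p := fun S => S.card = 1)
    have h4 : (univ : Finset (Finset (Fin n))).card = 2 ^ n := by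
      rw [Finset.card_univ, Fintype.card_finset, Fintype.card_fin]
    omega
  have hlb : 2 ^ n - n ≤ Module.finrank ℝ (LinearMap.range (colorMap n p)) := by
    have hspan : Submodule.span ℝ (Set.range v) ≤ LinearMap.range (colorMap n p) :=
      Submodule.span_le.2 (Set.range_subset_iff.2 hv_mem)
    have := Submodule.finrank_mono hspan
    rwa [finrank_span_eq_card hv_li, hcard] at this
  have hrank : Module.finrank ℝ (LinearMap.range (colorMap n p)) = 2 ^ n - n :=
    le_antisymm hub hlb
  refine ⟨hrank, ?_⟩
  have hrn := LinearMap.finrank_range_add_finrank_ker (colorMap n p)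
  rw [hrank, Module.finrank_fintype_fun_eq_card] at hrn
  omega
end

section
/- For every n ≥ 1 and every p ∈ (0,1) with p ≠ 1/2, the range of A_{n,p} is exactly the subspace {ν ∈ ℝ^{{0,1}^n} : for every i ∈ [n], p · Σ_{ρ : ρ(i)=0} ν(ρ) = (1−p) · Σ_{ρ : ρ(i)=1} ν(ρ)}. In particular, every probability vector ν on {0,1}^n all of whose one-dimensional marginals equal p δ_1 + (1−p) δ_0 lies in the range of A_{n,p}. -/
open Finset

namespace DCaux

variable {n : ℕ}


/-- weight of a color -/
def wt (p : ℝ) (b : Bool) : ℝ := if b then p else 1 - p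
/-- centered indicator -/
def cb (p : ℝ) (b : Bool) : ℝ := (if b then 1 else 0) - p
/-- k-th centered moment of Bernoulli(p) -/
def mm (p : ℝ) (k : ℕ) : ℝ := p * (1-p)^k + (1-p) * (-p)^k

lemma mm_zero (p : ℝ) : mm p 0 = 1 := by simp [mm]
lemma mm_one (p : ℝ) : mm p 1 = 0 := by simp [mm]; ring
lemma mm_eq (p : ℝ) (k : ℕ) :
    wt p false * cb p false ^ k + wt p true * cb p true ^ k = mm p k := by
  simp [wt, cb, mm]; ring

lemma mm_ne (p : ℝ) (hp : p ∈ Set.Ioo (0:ℝ) 1) (hp' : p ≠ 1/2) {k : ℕ} (hk : 2 ≤ k) :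
    mm p k ≠ 0 := by
  obtain ⟨h0, h1⟩ := hp
  have hq : (0:ℝ) < 1 - p := by linarith
  rcases Nat.even_or_odd k with he | ho
  · have : (-p)^k = p^k := he.neg_pow p
    rw [mm, this]
    positivity
  · have hpow : (-p)^k = -(p^k) := ho.neg_pow p
    rw [mm, hpow]
    obtain ⟨j, rfl⟩ := ho
    intro h
    have hj : 1 ≤ j := by omega
    -- p * (1-p)^(2j+1) = (1-p) * p^(2j+1)  ⇒ (1-p)^(2j) = p^(2j) ⇒ 1-p = p
    have h2 : p * (1-p) * (1-p)^(2*j) = (1-p) * p * p^(2*j) := by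
      linear_combination h
    have hne : p * (1-p) ≠ 0 := by positivity
    have h3 : (1-p)^(2*j) = p^(2*j) := by
      apply mul_left_cancel₀ hne
      linear_combination h2
    have : 1 - p = p := by
      rcases lt_trichotomy (1-p) p with hlt | heq | hgt
      · have := pow_lt_pow_left₀ hlt (le_of_lt hq) (by omega : 2*j ≠ 0)
        linarith [h3 ▸ this]
      · exact heq
      · have := pow_lt_pow_left₀ hgt (le_of_lt h0) (by omega : 2*j ≠ 0)
        linarith [h3 ▸ this]
    apply hp'
    linarith

/-- sum over boolean colorings of a product -/
lemma sumprod {I : Type*} [Fintype I] [DecidableEq I] (F : I → Bool → ℝ) :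
    ∑ χ : I → Bool, ∏ i, F i (χ i) = ∏ i, (F i false + F i true) := by
  have : ∀ i : I, F i false + F i true = ∑ b : Bool, F i b := by
    intro i; simp [Fintype.sum_bool]; ring
  simp_rw [this]
  rw [Finset.prod_univ_sum]
  rw [Fintype.piFinset_univ]



variable {n : ℕ}

/-- compatibility of a configuration with a partition -/
def compat (σ : Finpartition (univ : Finset (Fin n))) (ρ : Fin n → Bool) : Prop :=
  ∀ B ∈ σ.parts, ∀ i ∈ B, ∀ j ∈ B, ρ i = ρ j

instance (σ : Finpartition (univ : Finset (Fin n))) : DecidablePred (compat σ) := fun ρ => by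
  unfold compat; infer_instance

lemma colorMatrix_eq (p : ℝ) (σ : Finpartition (univ : Finset (Fin n))) (ρ : Fin n → Bool) :
    colorMatrix n p ρ σ = if compat σ ρ then
      p ^ (σ.parts.filter (fun B => ∀ i ∈ B, ρ i = true)).card *
        (1 - p) ^ (σ.parts.card - (σ.parts.filter (fun B => ∀ i ∈ B, ρ i = true)).card)
    else 0 := rfl

/-- the part of `i`, as an element of the subtype -/
def pt (σ : Finpartition (univ : Finset (Fin n))) (i : Fin n) : {B // B ∈ σ.parts} :=
  ⟨σ.part i, σ.part_mem.2 (mem_univ i)⟩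

lemma mem_pt (σ : Finpartition (univ : Finset (Fin n))) (i : Fin n) : i ∈ (pt σ i).1 :=
  σ.mem_part (mem_univ i)

lemma pt_eq (σ : Finpartition (univ : Finset (Fin n))) {B : Finset (Fin n)} (hB : B ∈ σ.parts)
    {i : Fin n} (hi : i ∈ B) : pt σ i = ⟨B, hB⟩ :=
  Subtype.ext (σ.part_eq_of_mem hB hi)

/-- configuration induced by a coloring of the parts -/
def cfg (σ : Finpartition (univ : Finset (Fin n))) (χ : {B // B ∈ σ.parts} → Bool) :
    Fin n → Bool := fun i => χ (pt σ i)

lemma cfg_compat (σ : Finpartition (univ : Finset (Fin n))) (χ : {B // B ∈ σ.parts} → Bool) :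
    compat σ (cfg σ χ) := by
  intro B hB i hi j hj
  unfold cfg
  rw [pt_eq σ hB hi, pt_eq σ hB hj]

lemma cfg_apply (σ : Finpartition (univ : Finset (Fin n))) (χ : {B // B ∈ σ.parts} → Bool)
    {B : Finset (Fin n)} (hB : B ∈ σ.parts) {i : Fin n} (hi : i ∈ B) :
    cfg σ χ i = χ ⟨B, hB⟩ := by
  unfold cfg; rw [pt_eq σ hB hi]

lemma cfg_inj (σ : Finpartition (univ : Finset (Fin n))) (χ χ' : {B // B ∈ σ.parts} → Bool)
    (h : cfg σ χ = cfg σ χ') : χ = χ' := by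
  funext B
  obtain ⟨a, ha⟩ := σ.nonempty_of_mem_parts B.2
  calc χ B = cfg σ χ a := (cfg_apply σ χ B.2 ha).symm
    _ = cfg σ χ' a := by rw [h]
    _ = χ' B := cfg_apply σ χ' B.2 ha

lemma cfg_surj (σ : Finpartition (univ : Finset (Fin n))) (ρ : Fin n → Bool)
    (h : compat σ ρ) : ∃ χ, cfg σ χ = ρ := by
  refine ⟨fun B => ρ (σ.nonempty_of_mem_parts B.2).choose, ?_⟩
  funext i
  unfold cfg
  exact h _ (pt σ i).2 _ (σ.nonempty_of_mem_parts (pt σ i).2).choose_spec _ (mem_pt σ i)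

lemma filter_true_eq (σ : Finpartition (univ : Finset (Fin n)))
    (χ : {B // B ∈ σ.parts} → Bool) :
    (σ.parts.filter (fun B => ∀ i ∈ B, cfg σ χ i = true)).card
      = (univ.filter (fun B : {B // B ∈ σ.parts} => χ B = true)).card := by
  rw [univ_eq_attach]
  have hcong : σ.parts.attach.filter (fun B => χ B = true)
      = σ.parts.attach.filter (fun B : {B // B ∈ σ.parts} => ∀ i ∈ B.1, cfg σ χ i = true) := by
    refine Finset.filter_congr fun B _ => ?_
    obtain ⟨a, ha⟩ := σ.nonempty_of_mem_parts B.2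
    constructor
    · intro hχ i hi
      rw [cfg_apply σ χ B.2 hi]; exact hχ
    · intro hall
      have := hall a ha
      rwa [cfg_apply σ χ B.2 ha] at this
  rw [hcong, Finset.filter_attach (fun B => ∀ i ∈ B, cfg σ χ i = true) σ.parts, card_map,
    card_attach]

lemma colorMatrix_cfg (p : ℝ) (σ : Finpartition (univ : Finset (Fin n)))
    (χ : {B // B ∈ σ.parts} → Bool) :
    colorMatrix n p (cfg σ χ) σ = ∏ B : {B // B ∈ σ.parts}, wt p (χ B) := by
  rw [colorMatrix_eq, if_pos (cfg_compat σ χ)]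
  rw [← Finset.prod_filter_mul_prod_filter_not univ (fun B => χ B = true)]
  have h1 : ∏ B ∈ univ.filter (fun B : {B // B ∈ σ.parts} => χ B = true), wt p (χ B)
      = p ^ (univ.filter (fun B : {B // B ∈ σ.parts} => χ B = true)).card := by
    rw [← Finset.prod_const]
    exact Finset.prod_congr rfl fun B hB => by
      simp only [mem_filter] at hB; simp [wt, hB.2]
  have h2 : ∏ B ∈ univ.filter (fun B : {B // B ∈ σ.parts} => ¬ χ B = true), wt p (χ B)
      = (1-p) ^ (univ.filter (fun B : {B // B ∈ σ.parts} => ¬ χ B = true)).card := by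
    rw [← Finset.prod_const]
    exact Finset.prod_congr rfl fun B hB => by
      simp only [mem_filter] at hB; simp [wt, Bool.not_eq_true _ ▸ hB.2]
  rw [h1, h2, filter_true_eq]
  congr 2
  have h3 := Finset.card_filter_add_card_filter_not
    (s := (univ : Finset {B // B ∈ σ.parts})) (p := fun B => χ B = true)
  have hcard : (univ : Finset {B // B ∈ σ.parts}).card = σ.parts.card := by
    rw [univ_eq_attach, card_attach]
  omega

/-- Main summation lemma: sum over configurations against a column of the color matrix. -/
lemma colsum (p : ℝ) (σ : Finpartition (univ : Finset (Fin n))) (F : (Fin n → Bool) → ℝ) :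
    ∑ ρ, colorMatrix n p ρ σ * F ρ
      = ∑ χ : {B // B ∈ σ.parts} → Bool, (∏ B, wt p (χ B)) * F (cfg σ χ) := by
  rw [← Finset.sum_filter_add_sum_filter_not univ (fun ρ => compat σ ρ)]
  have h0 : ∑ ρ ∈ univ.filter (fun ρ => ¬ compat σ ρ), colorMatrix n p ρ σ * F ρ = 0 := by
    apply Finset.sum_eq_zero
    intro ρ hρ
    simp only [mem_filter] at hρ
    rw [colorMatrix_eq, if_neg hρ.2, zero_mul]
  rw [h0, add_zero]
  refine (Finset.sum_bij (fun χ _ => cfg σ χ) ?_ ?_ ?_ ?_).symm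
  · intro χ _; simp only [mem_filter, mem_univ, true_and]; exact cfg_compat σ χ
  · intro χ _ χ' _ h; exact cfg_inj σ χ χ' h
  · intro ρ hρ
    simp only [mem_filter, mem_univ, true_and] at hρ
    obtain ⟨χ, hχ⟩ := cfg_surj σ ρ hρ
    exact ⟨χ, mem_univ χ, hχ⟩
  · intro χ _
    rw [colorMatrix_cfg]

-- NEW PART
/-- the Fourier-type matrix -/
noncomputable def Gmat (n : ℕ) (p : ℝ) : Matrix (Fin n → Bool) (Fin n → Bool) ℝ :=
  fun τ ρ => ∏ i ∈ univ.filter (fun i => τ i = true), cb p (ρ i)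

/-- its inverse -/
noncomputable def Hmat (n : ℕ) (p : ℝ) : Matrix (Fin n → Bool) (Fin n → Bool) ℝ :=
  fun ρ τ => ∏ i : Fin n,
    (if τ i then (if ρ i then (1:ℝ) else -1) else (if ρ i then p else 1-p))

lemma Gmat_prod (p : ℝ) (τ ρ : Fin n → Bool) :
    Gmat n p τ ρ = ∏ i, (if τ i = true then cb p (ρ i) else 1) :=
  Finset.prod_filter _ _

/-- Key computation: `G` applied to a column of the color matrix gives a product of moments. -/
lemma Gcol (p : ℝ) (σ : Finpartition (univ : Finset (Fin n))) (τ : Fin n → Bool) :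
    ∑ ρ, colorMatrix n p ρ σ * Gmat n p τ ρ
      = ∏ B : {B // B ∈ σ.parts}, mm p ((B.1.filter (fun i => τ i = true)).card) := by
  rw [colsum]
  have hgrp : ∀ χ : {B // B ∈ σ.parts} → Bool,
      Gmat n p τ (cfg σ χ)
        = ∏ B : {B // B ∈ σ.parts}, cb p (χ B) ^ ((B.1.filter (fun i => τ i = true)).card) := by
    intro χ
    show ∏ i ∈ univ.filter (fun i => τ i = true), cb p (cfg σ χ i) = _
    rw [← Finset.prod_fiberwise_of_maps_to (g := pt σ) (t := univ)
      (fun i _ => mem_univ _) (fun i => cb p (cfg σ χ i))]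
    refine Finset.prod_congr rfl fun B _ => ?_
    have hconst : ∀ i ∈ (univ.filter (fun i => τ i = true)).filter (fun i => pt σ i = B),
        cb p (cfg σ χ i) = cb p (χ B) := by
      intro i hi
      simp only [mem_filter] at hi
      unfold cfg
      rw [hi.2]
    rw [Finset.prod_congr rfl hconst, Finset.prod_const]
    congr 1
    have hset : (univ.filter (fun i => τ i = true)).filter (fun i => pt σ i = B)
        = B.1.filter (fun i => τ i = true) := by
      ext i
      simp only [mem_filter, mem_univ, true_and]
      constructor
      · rintro ⟨h1, h2⟩
        exact ⟨h2 ▸ mem_pt σ i, h1⟩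
      · rintro ⟨h1, h2⟩
        exact ⟨h2, pt_eq σ B.2 h1⟩
    rw [hset]
  simp_rw [hgrp, ← Finset.prod_mul_distrib]
  refine Eq.trans (sumprod fun (B : {B // B ∈ σ.parts}) (t : Bool) =>
    wt p t * cb p t ^ ((B.1.filter (fun i => τ i = true)).card)) ?_
  exact Finset.prod_congr rfl fun B _ => mm_eq p _

lemma HG (p : ℝ) : Hmat n p * Gmat n p = 1 := by
  ext ρ ρ'
  rw [Matrix.mul_apply]
  simp_rw [Gmat_prod, Hmat, ← Finset.prod_mul_distrib]
  refine Eq.trans (sumprod fun (i : Fin n) (t : Bool) =>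
    (if t then (if ρ i then (1:ℝ) else -1) else (if ρ i then p else 1-p)) *
      (if t = true then cb p (ρ' i) else 1)) ?_
  refine Eq.trans (Finset.prod_congr rfl fun i _ =>
      (by cases h : ρ i <;> cases h' : ρ' i <;> simp [cb] <;> ring :
        _ = if ρ i = ρ' i then (1:ℝ) else 0)) ?_
  by_cases h : ρ = ρ'
  · subst h
    simp [Matrix.one_apply]
  · rw [Matrix.one_apply_ne h]
    obtain ⟨i, hi⟩ := Function.ne_iff.mp h
    exact Finset.prod_eq_zero (mem_univ i) (if_neg hi)


-- PART D: partitions used in the induction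

/-- delta vector -/
def dlt {n : ℕ} (τ : Fin n → Bool) : (Fin n → Bool) → ℝ := fun x => if x = τ then 1 else 0

lemma expand {n : ℕ} (v : (Fin n → Bool) → ℝ) : v = ∑ τ, v τ • dlt τ := by
  funext x
  simp only [Finset.sum_apply, Pi.smul_apply, dlt, smul_eq_mul, mul_ite, mul_one, mul_zero]
  rw [Finset.sum_ite_eq univ x v]
  simp

lemma Gcol_bot (p : ℝ) (τ : Fin n → Bool) :
    ∑ ρ, colorMatrix n p ρ ⊥ * Gmat n p τ ρ
      = if τ = (fun _ => false) then 1 else 0 := by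
  rw [Gcol]
  by_cases h : τ = fun _ => false
  · rw [if_pos h]
    subst h
    apply Finset.prod_eq_one
    intro B _
    have : (B.1.filter (fun i => (false:Bool) = true)) = ∅ := by simp
    rw [this]
    simp [mm]
  · rw [if_neg h]
    obtain ⟨a, ha⟩ := Function.ne_iff.mp h
    have ha' : τ a = true := by
      cases hh : τ a
      · exact absurd hh ha
      · rfl
    have hmem : ({a} : Finset (Fin n)) ∈ (⊥ : Finpartition (univ : Finset (Fin n))).parts := by
      rw [Finpartition.mem_bot_iff]
      exact ⟨a, mem_univ a, rfl⟩
    apply Finset.prod_eq_zero (mem_univ (⟨{a}, hmem⟩ : {B // B ∈ (⊥ : Finpartition (univ : Finset (Fin n))).parts}))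
    have : (({a} : Finset (Fin n)).filter (fun i => τ i = true)) = {a} := by
      rw [Finset.filter_singleton, if_pos ha']
    rw [this]
    simp [mm_one]

/-- the setoid whose classes are `S` and singletons -/
def spSetoid (S : Finset (Fin n)) : Setoid (Fin n) where
  r a b := a = b ∨ (a ∈ S ∧ b ∈ S)
  iseqv := by
    refine ⟨fun a => Or.inl rfl, ?_, ?_⟩
    · rintro a b (rfl | ⟨h1, h2⟩)
      · exact Or.inl rfl
      · exact Or.inr ⟨h2, h1⟩
    · rintro a b c (rfl | ⟨h1, h2⟩) (rfl | ⟨h3, h4⟩)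
      · exact Or.inl rfl
      · exact Or.inr ⟨h3, h4⟩
      · exact Or.inr ⟨h1, h2⟩
      · exact Or.inr ⟨h1, h4⟩

instance (S : Finset (Fin n)) : DecidableRel (spSetoid S).r :=
  fun a b => decidable_of_iff (a = b ∨ (a ∈ S ∧ b ∈ S)) Iff.rfl

/-- the partition with parts `S` and singletons -/
def sp (S : Finset (Fin n)) : Finpartition (univ : Finset (Fin n)) :=
  Finpartition.ofSetoid (spSetoid S)

lemma sp_part_mem {S : Finset (Fin n)} {a : Fin n} (ha : a ∈ S) : (sp S).part a = S := by
  ext b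
  rw [show (sp S).part a = (Finpartition.ofSetoid (spSetoid S)).part a from rfl,
    Finpartition.mem_part_ofSetoid_iff_rel]
  show a = b ∨ (a ∈ S ∧ b ∈ S) ↔ _
  constructor
  · rintro (rfl | ⟨_, h⟩)
    · exact ha
    · exact h
  · intro hb
    exact Or.inr ⟨ha, hb⟩

lemma sp_part_not_mem {S : Finset (Fin n)} {a : Fin n} (ha : a ∉ S) : (sp S).part a = {a} := by
  ext b
  rw [show (sp S).part a = (Finpartition.ofSetoid (spSetoid S)).part a from rfl,
    Finpartition.mem_part_ofSetoid_iff_rel, mem_singleton]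
  show a = b ∨ (a ∈ S ∧ b ∈ S) ↔ _
  constructor
  · rintro (rfl | ⟨h, _⟩)
    · rfl
    · exact absurd h ha
  · rintro rfl
    exact Or.inl rfl

lemma sp_parts {S : Finset (Fin n)} {B : Finset (Fin n)} (hB : B ∈ (sp S).parts) :
    B = S ∨ ∃ a, a ∉ S ∧ B = {a} := by
  obtain ⟨a, ha⟩ := (sp S).nonempty_of_mem_parts hB
  have hpa := (sp S).part_eq_of_mem hB ha
  by_cases haS : a ∈ S
  · left; rw [← hpa, sp_part_mem haS]
  · right; exact ⟨a, haS, by rw [← hpa, sp_part_not_mem haS]⟩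

lemma S_mem_sp {S : Finset (Fin n)} (hS : S.Nonempty) : S ∈ (sp S).parts := by
  obtain ⟨a, ha⟩ := hS
  have := (sp S).part_mem.2 (mem_univ a)
  rwa [sp_part_mem ha] at this

lemma Gcol_sp (p : ℝ) {S : Finset (Fin n)} (hS : S.Nonempty) (τ : Fin n → Bool) :
    ∑ ρ, colorMatrix n p ρ (sp S) * Gmat n p τ ρ
      = if (univ.filter (fun i => τ i = true)) ⊆ S
          then mm p ((univ.filter (fun i => τ i = true)).card) else 0 := by
  rw [Gcol]
  by_cases h : (univ.filter (fun i => τ i = true)) ⊆ S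
  · rw [if_pos h]
    refine Finset.prod_eq_single_of_mem ⟨S, S_mem_sp hS⟩ (mem_univ _) ?_ |>.trans ?_
    · intro B _ hBne
      rcases sp_parts B.2 with hBS | ⟨a, haS, hBa⟩
      · exact absurd (Subtype.ext hBS) hBne
      · have hτa : ¬ (τ a = true) := fun hh => haS (h (by simp [hh]))
        rw [hBa]
        rw [Finset.filter_singleton, if_neg hτa]
        simp [mm_zero]
    · have hSe : S.filter (fun i => τ i = true) = univ.filter (fun i => τ i = true) := by
        ext i
        simp only [mem_filter, mem_univ, true_and]
        exact ⟨fun ⟨_, h2⟩ => h2, fun h2 => ⟨h (mem_filter.mpr ⟨mem_univ i, h2⟩), h2⟩⟩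
      rw [hSe]
  · rw [if_neg h]
    obtain ⟨a, haf, haS⟩ : ∃ a, a ∈ univ.filter (fun i => τ i = true) ∧ a ∉ S := by
      by_contra hc
      push_neg at hc
      exact h hc
    have hmem : ({a} : Finset (Fin n)) ∈ (sp S).parts := by
      have := (sp S).part_mem.2 (mem_univ a)
      rwa [sp_part_not_mem haS] at this
    apply Finset.prod_eq_zero (mem_univ (⟨{a}, hmem⟩ : {B // B ∈ (sp S).parts}))
    have hτa : τ a = true := (mem_filter.mp haf).2
    rw [show (({a} : Finset (Fin n)).filter (fun i => τ i = true)) = {a} by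
      rw [Finset.filter_singleton, if_pos hτa]]
    simp [mm_one]

-- PART E : the strong induction and main theorem ingredients

variable (n) in
/-- the image of the range of the color map under `G` -/
noncomputable def Vsub (p : ℝ) : Submodule ℝ ((Fin n → Bool) → ℝ) :=
  (LinearMap.range (colorMap n p)).map (Gmat n p).mulVecLin

lemma col_mem_range (p : ℝ) (σ : Finpartition (univ : Finset (Fin n))) :
    (fun ρ => colorMatrix n p ρ σ) ∈ LinearMap.range (colorMap n p) := by
  refine ⟨Pi.single σ 1, ?_⟩
  funext ρ
  simp [colorMap, Matrix.mulVecLin_apply, Matrix.mulVec, dotProduct, Pi.single_apply]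

lemma Gcol_Vsub (p : ℝ) (σ : Finpartition (univ : Finset (Fin n))) :
    (fun τ => ∑ ρ, colorMatrix n p ρ σ * Gmat n p τ ρ) ∈ Vsub n p := by
  refine ⟨fun ρ => colorMatrix n p ρ σ, col_mem_range p σ, ?_⟩
  funext τ
  simp only [Matrix.mulVecLin_apply, Matrix.mulVec, dotProduct]
  exact Finset.sum_congr rfl fun ρ _ => mul_comm _ _

lemma filter_eq_of_eq {τ τ' : Fin n → Bool}
    (h : univ.filter (fun i => τ i = true) = univ.filter (fun i => τ' i = true)) : τ = τ' := by
  funext i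
  have := Finset.ext_iff.mp h i
  simp only [mem_filter, mem_univ, true_and] at this
  cases h1 : τ i <;> cases h2 : τ' i <;> simp_all

lemma dlt_mem_Vsub (p : ℝ) (hp : p ∈ Set.Ioo (0:ℝ) 1) (hp' : p ≠ 1/2) :
    ∀ k (τ : Fin n → Bool), (univ.filter (fun i => τ i = true)).card = k → k ≠ 1 →
      dlt τ ∈ Vsub n p := by
  intro k
  induction k using Nat.strong_induction_on with
  | _ k IH =>
    intro τ hk hk1
    match k, hk1 with
    | 0, _ =>
      have hτ : τ = fun _ => false := by
        rw [Finset.card_eq_zero] at hk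
        funext i
        cases h1 : τ i
        · rfl
        · exact absurd (hk ▸ mem_filter.mpr ⟨mem_univ i, h1⟩) (notMem_empty i)
      subst hτ
      have hthis := Gcol_Vsub p (⊥ : Finpartition (univ : Finset (Fin n)))
      have heq : dlt (fun _ => false) = fun τ' => ∑ ρ, colorMatrix n p ρ ⊥ * Gmat n p τ' ρ := by
        funext τ'
        rw [Gcol_bot]
        rfl
      rw [heq]
      exact hthis
    | (m+2), _ =>
      set S := univ.filter (fun i => τ i = true) with hS
      have hSne : S.Nonempty := by
        rw [← Finset.card_pos, hk]; omega
      have hu := Gcol_Vsub p (sp S)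
      set u : (Fin n → Bool) → ℝ := fun τ' => ∑ ρ, colorMatrix n p ρ (sp S) * Gmat n p τ' ρ
        with hudef
      have huval : ∀ τ', u τ' = if (univ.filter (fun i => τ' i = true)) ⊆ S
          then mm p ((univ.filter (fun i => τ' i = true)).card) else 0 :=
        fun τ' => Gcol_sp p hSne τ'
      have huτ : u τ = mm p (m+2) := by
        rw [huval, ← hS, if_pos (Finset.Subset.refl S), hk]
      have hexp := expand u
      rw [← Finset.add_sum_erase univ (fun τ' => u τ' • dlt τ') (mem_univ τ)] at hexp
      have hsum : ∑ τ' ∈ univ.erase τ, u τ' • dlt τ' ∈ Vsub n p := by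
        refine Submodule.sum_mem _ fun τ' hτ' => ?_
        by_cases h0 : u τ' = 0
        · rw [h0, zero_smul]; exact Submodule.zero_mem _
        · refine Submodule.smul_mem _ _ ?_
          have hτ'τ : τ' ≠ τ := (Finset.mem_erase.mp hτ').1
          have hsub : univ.filter (fun i => τ' i = true) ⊆ S := by
            by_contra hc
            exact h0 (by rw [huval, if_neg hc])
          have hne : univ.filter (fun i => τ' i = true) ≠ S :=
            fun hh => hτ'τ (filter_eq_of_eq (hS ▸ hh))
          have hlt : (univ.filter (fun i => τ' i = true)).card < m + 2 := by
            rw [← hk]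
            exact Finset.card_lt_card (lt_of_le_of_ne hsub hne)
          have hK1 : (univ.filter (fun i => τ' i = true)).card ≠ 1 := by
            intro h1
            apply h0
            rw [huval, if_pos hsub, h1, mm_one]
          exact IH _ hlt τ' rfl hK1
        -- done
      have hmem : u τ • dlt τ ∈ Vsub n p := by
        rw [eq_sub_of_add_eq hexp.symm]
        exact Submodule.sub_mem _ hu hsum
      have hmmne : mm p (m+2) ≠ 0 := mm_ne p hp hp' (by omega)
      have : dlt τ = (mm p (m+2))⁻¹ • (u τ • dlt τ) := by
        rw [huτ, smul_smul, inv_mul_cancel₀ hmmne, one_smul]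
      rw [this]
      exact Submodule.smul_mem _ _ hmem

-- PART F : final assembly

lemma GcolK1 (p : ℝ) (σ : Finpartition (univ : Finset (Fin n))) {τ : Fin n → Bool}
    (h : (univ.filter (fun i => τ i = true)).card = 1) :
    ∑ ρ, colorMatrix n p ρ σ * Gmat n p τ ρ = 0 := by
  rw [Gcol]
  obtain ⟨i, hi⟩ := Finset.card_eq_one.mp h
  apply Finset.prod_eq_zero (mem_univ (pt σ i))
  have hset : (pt σ i).1.filter (fun j => τ j = true) = {i} := by
    ext j
    simp only [mem_filter, mem_singleton]
    constructor
    · rintro ⟨_, hj2⟩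
      have : j ∈ ({i} : Finset _) := hi ▸ (mem_filter.mpr ⟨mem_univ j, hj2⟩)
      exact mem_singleton.mp this
    · rintro rfl
      have : j ∈ univ.filter (fun k => τ k = true) := hi ▸ mem_singleton_self j
      exact ⟨mem_pt σ j, (mem_filter.mp this).2⟩
  rw [hset]
  simp [mm_one]

lemma G_mulVec_range_K1 (p : ℝ) {ν : (Fin n → Bool) → ℝ}
    (hν : ν ∈ LinearMap.range (colorMap n p)) {τ : Fin n → Bool}
    (h : (univ.filter (fun i => τ i = true)).card = 1) :
    (Gmat n p).mulVec ν τ = 0 := by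
  obtain ⟨μ, rfl⟩ := hν
  simp only [Matrix.mulVec, dotProduct, colorMap, Matrix.mulVecLin_apply]
  show ∑ ρ, Gmat n p τ ρ * (∑ σ, colorMatrix n p ρ σ * μ σ) = 0
  simp_rw [Finset.mul_sum]
  rw [Finset.sum_comm]
  apply Finset.sum_eq_zero
  intro σ _
  have hcalc : ∑ ρ, Gmat n p τ ρ * (colorMatrix n p ρ σ * μ σ)
      = (∑ ρ, colorMatrix n p ρ σ * Gmat n p τ ρ) * μ σ := by
    rw [Finset.sum_mul]
    exact Finset.sum_congr rfl fun ρ _ => by ring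
  rw [hcalc, GcolK1 p σ h, zero_mul]

lemma filter_decide_eq (i : Fin n) :
    univ.filter (fun j : Fin n => (decide (j = i)) = true) = {i} := by
  ext j; simp

lemma constraint_iff (p : ℝ) (ν : (Fin n → Bool) → ℝ) (i : Fin n) :
    (p * ∑ ρ ∈ univ.filter (fun ρ : Fin n → Bool => ρ i = false), ν ρ
      = (1 - p) * ∑ ρ ∈ univ.filter (fun ρ : Fin n → Bool => ρ i = true), ν ρ)
    ↔ (Gmat n p).mulVec ν (fun j => decide (j = i)) = 0 := by
  have hval : (Gmat n p).mulVec ν (fun j => decide (j = i)) = ∑ ρ, cb p (ρ i) * ν ρ := by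
    simp only [Matrix.mulVec, dotProduct, Gmat]
    refine Finset.sum_congr rfl fun ρ _ => ?_
    congr 1
    rw [show (univ.filter fun j : Fin n => (decide (j = i)) = true) = {i} from filter_decide_eq i]
    exact Finset.prod_singleton _ _
  rw [hval]
  rw [← Finset.sum_filter_add_sum_filter_not univ (fun ρ : Fin n → Bool => ρ i = true)
    (fun ρ => cb p (ρ i) * ν ρ)]
  have h1 : ∑ ρ ∈ univ.filter (fun ρ : Fin n → Bool => ρ i = true), cb p (ρ i) * ν ρ
      = (1 - p) * ∑ ρ ∈ univ.filter (fun ρ : Fin n → Bool => ρ i = true), ν ρ := by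
    rw [Finset.mul_sum]
    refine Finset.sum_congr rfl fun ρ hρ => ?_
    rw [(mem_filter.mp hρ).2]
    simp [cb]
  have h2 : ∑ ρ ∈ univ.filter (fun ρ : Fin n → Bool => ¬ ρ i = true), cb p (ρ i) * ν ρ
      = (-p) * ∑ ρ ∈ univ.filter (fun ρ : Fin n → Bool => ρ i = false), ν ρ := by
    rw [show (univ.filter fun ρ : Fin n → Bool => ¬ ρ i = true)
        = univ.filter (fun ρ : Fin n → Bool => ρ i = false) from
      Finset.filter_congr fun ρ _ => by simp]
    rw [Finset.mul_sum]
    refine Finset.sum_congr rfl fun ρ hρ => ?_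
    rw [(mem_filter.mp hρ).2]
    simp [cb]
  rw [h1, h2]
  constructor <;> intro hh <;> linarith

lemma range_eq (p : ℝ) (hp : p ∈ Set.Ioo (0:ℝ) 1) (hp' : p ≠ 1/2) :
    (LinearMap.range (colorMap n p) : Set ((Fin n → Bool) → ℝ)) =
      {ν : (Fin n → Bool) → ℝ | ∀ i : Fin n,
        p * ∑ ρ ∈ univ.filter (fun ρ : Fin n → Bool => ρ i = false), ν ρ
          = (1 - p) * ∑ ρ ∈ univ.filter (fun ρ : Fin n → Bool => ρ i = true), ν ρ} := by
  ext ν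
  simp only [SetLike.mem_coe, Set.mem_setOf_eq]
  constructor
  · intro hν i
    rw [constraint_iff]
    refine G_mulVec_range_K1 p hν ?_
    rw [show (univ.filter fun j : Fin n => (decide (j = i)) = true) = {i} from filter_decide_eq i]
    exact Finset.card_singleton i
  · intro hν
    have hν_eq : ν = (Hmat n p).mulVec ((Gmat n p).mulVec ν) := by
      rw [Matrix.mulVec_mulVec, HG, Matrix.one_mulVec]
    set f := (Gmat n p).mulVec ν with hf
    have hf0 : ∀ τ : Fin n → Bool, (univ.filter (fun i => τ i = true)).card = 1 → f τ = 0 := by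
      intro τ hτ
      obtain ⟨i, hi⟩ := Finset.card_eq_one.mp hτ
      have hτi : τ = fun j => decide (j = i) := by
        funext j
        by_cases hji : j = i
        · subst hji
          have : j ∈ univ.filter (fun k => τ k = true) := hi ▸ mem_singleton_self j
          simp [(mem_filter.mp this).2]
        · have hnot : j ∉ univ.filter (fun k => τ k = true) := by
            rw [hi]; simp [hji]
          have hτj : τ j = false := by
            cases h : τ j
            · rfl
            · exact absurd (mem_filter.mpr ⟨mem_univ j, h⟩) hnot
          simp [hτj, hji]
      rw [hf, hτi]
      exact (constraint_iff p ν i).mp (hν i)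
    have hmap : (Hmat n p).mulVec f = ∑ τ, f τ • (Hmat n p).mulVecLin (dlt τ) := by
      show (Hmat n p).mulVecLin f = _
      conv_lhs => rw [expand f]
      rw [map_sum]
      exact Finset.sum_congr rfl fun τ _ => by rw [map_smul]
    rw [hν_eq]
    show (Hmat n p).mulVec f ∈ LinearMap.range (colorMap n p)
    rw [hmap]
    apply Submodule.sum_mem
    intro τ _
    by_cases h0 : f τ = 0
    · rw [h0, zero_smul]; exact Submodule.zero_mem _
    · refine Submodule.smul_mem _ _ ?_
      have hK1 : (univ.filter (fun i => τ i = true)).card ≠ 1 := fun h1 => h0 (hf0 τ h1)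
      obtain ⟨v, hvR, hvG⟩ := dlt_mem_Vsub p hp hp' _ τ rfl hK1
      have hHv : (Hmat n p).mulVecLin (dlt τ) = v := by
        rw [← hvG]
        show (Hmat n p).mulVec ((Gmat n p).mulVec v) = v
        rw [Matrix.mulVec_mulVec, HG, Matrix.one_mulVec]
      rw [hHv]
      exact hvR

end DCaux

/-- for `p ∈ (0,1)`, `p ≠ 1/2`, the range of `A_{n,p}` is exactly the set of
`ν` with `p ⬝ Σ_{ρ(i)=0} ν(ρ) = (1-p) ⬝ Σ_{ρ(i)=1} ν(ρ)` for all `i`; in particular every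
probability vector with marginals `p δ_1 + (1-p) δ_0` lies in the range. -/
theorem range_colorMap (n : ℕ) (hn : 1 ≤ n) (p : ℝ) (hp : p ∈ Set.Ioo (0:ℝ) 1)
    (hp' : p ≠ 1/2) :
    (LinearMap.range (colorMap n p) : Set ((Fin n → Bool) → ℝ)) =
      {ν : (Fin n → Bool) → ℝ | ∀ i : Fin n,
        p * ∑ ρ ∈ univ.filter (fun ρ : Fin n → Bool => ρ i = false), ν ρ
          = (1 - p) * ∑ ρ ∈ univ.filter (fun ρ : Fin n → Bool => ρ i = true), ν ρ} ∧
    ∀ ν : (Fin n → Bool) → ℝ, (∀ ρ, 0 ≤ ν ρ) → (∑ ρ, ν ρ = 1) →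
      (∀ i : Fin n, ∑ ρ ∈ univ.filter (fun ρ : Fin n → Bool => ρ i = true), ν ρ = p) →
      ν ∈ LinearMap.range (colorMap n p) := by
  refine ⟨DCaux.range_eq p hp hp', ?_⟩
  intro ν _ hν1 hmarg
  have hmem := Set.ext_iff.mp (DCaux.range_eq (n := n) p hp hp') ν
  simp only [SetLike.mem_coe, Set.mem_setOf_eq] at hmem
  apply hmem.mpr
  intro i
  have htot := Finset.sum_filter_add_sum_filter_not univ (fun ρ : Fin n → Bool => ρ i = false) ν
  rw [show (univ.filter fun ρ : Fin n → Bool => ¬ ρ i = false)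
      = univ.filter (fun ρ : Fin n → Bool => ρ i = true) from
    Finset.filter_congr fun ρ _ => by simp] at htot
  rw [hν1, hmarg i] at htot
  rw [hmarg i]
  have : ∑ ρ ∈ univ.filter (fun ρ : Fin n → Bool => ρ i = false), ν ρ = 1 - p := by linarith
  rw [this]
  ring
end

section
/- Let n ≥ 1 and p ∈ (0,1). For any q ∈ ℝ^{B_n} and any ν ∈ ℝ^{{0,1}^n}, one has A_{n,p} q = ν if and only if for every S ⊆ [n], Σ_{σ ∈ B_n} p^{‖σ_S‖} q_σ = ν(1^S). -/
open Finset

/-- `‖σ_S‖`: the number of blocks of the restriction of `σ` to `S`, i.e. the number of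
blocks of `σ` meeting `S`. -/
def numBlocksOn {n : ℕ} (σ : Finpartition (univ : Finset (Fin n))) (S : Finset (Fin n)) : ℕ :=
  (σ.parts.filter fun B => (B ∩ S).Nonempty).card

lemma sum_colorMatrix_eq {n : ℕ} (p : ℝ) (σ : Finpartition (univ : Finset (Fin n)))
    (S : Finset (Fin n)) :
    ∑ ρ ∈ univ.filter (fun ρ : Fin n → Bool => ∀ i ∈ S, ρ i = true),
      colorMatrix n p ρ σ = p ^ numBlocksOn σ S := by
  classical
  set M : Finset (Finset (Fin n)) := σ.parts.filter (fun B => (B ∩ S).Nonempty) with hM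
  -- reduce to a sum over sets of blocks
  have step1 : ∑ ρ ∈ univ.filter (fun ρ : Fin n → Bool => ∀ i ∈ S, ρ i = true),
      colorMatrix n p ρ σ
      = ∑ ρ ∈ univ.filter (fun ρ : Fin n → Bool =>
            (∀ i ∈ S, ρ i = true) ∧ ∀ B ∈ σ.parts, ∀ i ∈ B, ∀ j ∈ B, ρ i = ρ j),
          p ^ (σ.parts.filter (fun B => ∀ i ∈ B, ρ i = true)).card *
            (1 - p) ^ (σ.parts.card - (σ.parts.filter (fun B => ∀ i ∈ B, ρ i = true)).card) := by
    rw [← Finset.filter_filter, Finset.sum_filter (s := univ.filter _)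
      (fun ρ : Fin n → Bool => ∀ B ∈ σ.parts, ∀ i ∈ B, ∀ j ∈ B, ρ i = ρ j)]
    refine Finset.sum_congr rfl fun ρ _ => ?_
    simp only [colorMatrix]
  have step2 : ∑ ρ ∈ univ.filter (fun ρ : Fin n → Bool =>
            (∀ i ∈ S, ρ i = true) ∧ ∀ B ∈ σ.parts, ∀ i ∈ B, ∀ j ∈ B, ρ i = ρ j),
          p ^ (σ.parts.filter (fun B => ∀ i ∈ B, ρ i = true)).card *
            (1 - p) ^ (σ.parts.card - (σ.parts.filter (fun B => ∀ i ∈ B, ρ i = true)).card)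
      = ∑ T ∈ σ.parts.powerset.filter (fun T => M ⊆ T),
          p ^ T.card * (1 - p) ^ (σ.parts.card - T.card) := by
    refine Finset.sum_nbij'
      (fun ρ => σ.parts.filter (fun B => ∀ i ∈ B, ρ i = true))
      (fun T => fun x => decide (σ.part x ∈ T)) ?_ ?_ ?_ ?_ ?_
    · intro ρ hρ
      simp only [mem_filter, mem_univ, true_and] at hρ
      obtain ⟨hS, hconst⟩ := hρ
      simp only [mem_filter, mem_powerset]
      refine ⟨Finset.filter_subset _ _, ?_⟩
      intro B hB
      rw [hM, mem_filter] at hB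
      obtain ⟨hBp, x, hx⟩ := hB
      rw [mem_inter] at hx
      simp only [mem_filter]
      refine ⟨hBp, fun i hi => ?_⟩
      rw [hconst B hBp i hi x hx.1]
      exact hS x hx.2
    · intro T hT
      simp only [mem_filter, mem_powerset] at hT
      obtain ⟨hTp, hMT⟩ := hT
      simp only [mem_filter, mem_univ, true_and]
      constructor
      · intro i hi
        simp only [decide_eq_true_eq]
        apply hMT
        rw [hM, mem_filter]
        exact ⟨σ.part_mem.2 (mem_univ i), ⟨i, mem_inter.2 ⟨σ.mem_part (mem_univ i), hi⟩⟩⟩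
      · intro B hB i hi j hj
        rw [σ.part_eq_of_mem hB hi, σ.part_eq_of_mem hB hj]
    · intro ρ hρ
      simp only [mem_filter, mem_univ, true_and] at hρ
      obtain ⟨hS, hconst⟩ := hρ
      funext x
      have hpm := σ.part_mem.2 (mem_univ x)
      have hxm := σ.mem_part (mem_univ x)
      rw [Bool.eq_iff_iff, decide_eq_true_eq, mem_filter]
      constructor
      · rintro ⟨-, hall⟩
        exact hall x hxm
      · intro h
        exact ⟨hpm, fun i hi => (hconst _ hpm i hi x hxm).trans h⟩
    · intro T hT
      simp only [mem_filter, mem_powerset] at hT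
      obtain ⟨hTp, hMT⟩ := hT
      ext B
      simp only [mem_filter, decide_eq_true_eq]
      constructor
      · rintro ⟨hBp, hall⟩
        obtain ⟨x, hx⟩ := σ.nonempty_of_mem_parts hBp
        have := hall x hx
        rwa [σ.part_eq_of_mem hBp hx] at this
      · intro hBT
        refine ⟨hTp hBT, fun i hi => ?_⟩
        rw [σ.part_eq_of_mem (hTp hBT) hi]
        exact hBT
    · intro ρ hρ
      rfl
  have step3 : ∑ T ∈ σ.parts.powerset.filter (fun T => M ⊆ T),
          p ^ T.card * (1 - p) ^ (σ.parts.card - T.card) = p ^ numBlocksOn σ S := by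
    have hMsub : M ⊆ σ.parts := Finset.filter_subset _ _
    have hprod := Finset.prod_add (fun _ : Finset (Fin n) => p)
      (fun B : Finset (Fin n) => if (B ∩ S).Nonempty then (0:ℝ) else (1 - p)) σ.parts
    have hL : ∏ B ∈ σ.parts, (p + if (B ∩ S).Nonempty then (0:ℝ) else (1 - p))
        = p ^ numBlocksOn σ S := by
      have : ∀ B ∈ σ.parts, (p + if (B ∩ S).Nonempty then (0:ℝ) else (1 - p))
          = if (B ∩ S).Nonempty then p else 1 := by
        intro B _
        by_cases h : (B ∩ S).Nonempty <;> simp [h]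
      rw [Finset.prod_congr rfl this, Finset.prod_ite, Finset.prod_const, Finset.prod_const,
        one_pow, mul_one]
      rfl
    have hR : ∑ T ∈ σ.parts.powerset,
        (∏ _i ∈ T, p) * ∏ B ∈ σ.parts \ T, (if (B ∩ S).Nonempty then (0:ℝ) else (1 - p))
        = ∑ T ∈ σ.parts.powerset.filter (fun T => M ⊆ T),
            p ^ T.card * (1 - p) ^ (σ.parts.card - T.card) := by
      rw [Finset.sum_filter]
      refine Finset.sum_congr rfl fun T hT => ?_
      rw [mem_powerset] at hT
      by_cases hMT : M ⊆ T
      · rw [if_pos hMT, Finset.prod_const]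
        congr 1
        have : ∀ B ∈ σ.parts \ T, (if (B ∩ S).Nonempty then (0:ℝ) else (1 - p)) = 1 - p := by
          intro B hB
          rw [mem_sdiff] at hB
          rw [if_neg]
          intro hne
          exact hB.2 (hMT (by rw [hM, mem_filter]; exact ⟨hB.1, hne⟩))
        rw [Finset.prod_congr rfl this, Finset.prod_const, Finset.card_sdiff_of_subset hT]
      · rw [if_neg hMT]
        obtain ⟨B, hBM, hBT⟩ := Finset.not_subset.1 hMT
        rw [hM, mem_filter] at hBM
        refine mul_eq_zero_of_right _ (Finset.prod_eq_zero (i := B) ?_ ?_)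
        · exact mem_sdiff.2 ⟨hBM.1, hBT⟩
        · rw [if_pos hBM.2]
    rw [hprod, hR] at hL
    exact hL
  rw [step1, step2, step3]

lemma zeta_inj {n : ℕ} (d : (Fin n → Bool) → ℝ)
    (h : ∀ S : Finset (Fin n),
      ∑ ρ ∈ univ.filter (fun ρ : Fin n → Bool => ∀ i ∈ S, ρ i = true), d ρ = 0) :
    d = 0 := by
  classical
  have key : ∀ k : ℕ, ∀ ρ0 : Fin n → Bool,
      n ≤ k + (univ.filter (fun i => ρ0 i = true)).card → d ρ0 = 0 := by
    intro k
    induction k with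
    | zero =>
      intro ρ0 h0
      have hle : (univ.filter (fun i => ρ0 i = true)).card ≤ n := by
        simpa using Finset.card_filter_le (univ : Finset (Fin n)) _
      have hcard : (univ.filter (fun i => ρ0 i = true)).card = n := le_antisymm hle (by omega)
      have huniv : (univ.filter (fun i => ρ0 i = true)) = univ :=
        Finset.eq_univ_of_card _ (by rw [hcard]; exact (Fintype.card_fin n).symm)
      have hall : ∀ i, ρ0 i = true := fun i => by
        have hi : i ∈ univ.filter (fun i => ρ0 i = true) := by
          rw [huniv]; exact mem_univ i
        exact (Finset.mem_filter.1 hi).2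
      have h1 := h univ
      have hset : univ.filter (fun ρ : Fin n → Bool =>
          ∀ i ∈ (univ : Finset (Fin n)), ρ i = true) = {ρ0} := by
        ext ρ
        rw [Finset.mem_filter, Finset.mem_singleton]
        constructor
        · rintro ⟨-, hρ⟩
          funext i
          rw [hρ i (mem_univ i), hall i]
        · rintro rfl
          exact ⟨mem_univ _, fun i _ => hall i⟩
      rw [hset, Finset.sum_singleton] at h1
      exact h1
    | succ k ih =>
      intro ρ0 h0
      set S0 : Finset (Fin n) := univ.filter (fun i => ρ0 i = true) with hS0
      have hmem : ρ0 ∈ univ.filter (fun ρ : Fin n → Bool => ∀ i ∈ S0, ρ i = true) := by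
        rw [Finset.mem_filter]
        refine ⟨mem_univ _, fun i hi => ?_⟩
        rw [hS0, Finset.mem_filter] at hi
        exact hi.2
      have := h S0
      rw [← Finset.add_sum_erase _ _ hmem] at this
      have hz : ∑ ρ ∈ (univ.filter (fun ρ : Fin n → Bool => ∀ i ∈ S0, ρ i = true)).erase ρ0,
          d ρ = 0 := by
        refine Finset.sum_eq_zero fun ρ hρ => ?_
        rw [Finset.mem_erase, mem_filter] at hρ
        obtain ⟨hne, _, hge⟩ := hρ
        have hsub : S0 ⊆ univ.filter (fun i => ρ i = true) := by
          intro i hi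
          rw [mem_filter]
          exact ⟨mem_univ i, hge i hi⟩
        have hssub : S0 ⊂ univ.filter (fun i => ρ i = true) := by
          refine hsub.ssubset_of_ne ?_
          intro heq
          apply hne
          funext i
          have : (i ∈ S0) = (i ∈ univ.filter fun i => ρ i = true) := by rw [heq]
          simp only [hS0, mem_filter, mem_univ, true_and, eq_iff_iff] at this
          cases h1 : ρ0 i <;> cases h2 : ρ i <;> simp_all
        have hlt : S0.card < (univ.filter (fun i => ρ i = true)).card :=
          Finset.card_lt_card hssub
        exact ih ρ (by omega)
      rw [hz, add_zero] at this
      exact this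
  funext ρ
  have := key n ρ (by omega)
  simpa using this

/-- `A_{n,p} q = ν` iff for every `S ⊆ [n]`,
`Σ_σ p^{‖σ_S‖} q_σ = ν(1^S)`. -/
theorem colorMap_eq_iff (n : ℕ) (hn : 1 ≤ n) (p : ℝ) (hp : p ∈ Set.Ioo (0:ℝ) 1)
    (q : Finpartition (univ : Finset (Fin n)) → ℝ) (ν : (Fin n → Bool) → ℝ) :
    colorMap n p q = ν ↔
      ∀ S : Finset (Fin n),
        ∑ σ : Finpartition (univ : Finset (Fin n)), p ^ numBlocksOn σ S * q σ
          = ∑ ρ ∈ univ.filter (fun ρ : Fin n → Bool => ∀ i ∈ S, ρ i = true), ν ρ := by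
  classical
  have hmom : ∀ S : Finset (Fin n),
      ∑ ρ ∈ univ.filter (fun ρ : Fin n → Bool => ∀ i ∈ S, ρ i = true), colorMap n p q ρ
        = ∑ σ : Finpartition (univ : Finset (Fin n)), p ^ numBlocksOn σ S * q σ := by
    intro S
    have : ∀ ρ : Fin n → Bool, colorMap n p q ρ
        = ∑ σ : Finpartition (univ : Finset (Fin n)), colorMatrix n p ρ σ * q σ := by
      intro ρ
      simp [colorMap, Matrix.mulVecLin_apply, Matrix.mulVec, dotProduct]
    simp_rw [this]
    rw [Finset.sum_comm]
    refine Finset.sum_congr rfl fun σ _ => ?_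
    rw [← Finset.sum_mul, sum_colorMatrix_eq]
  constructor
  · intro heq S
    rw [← hmom S, heq]
  · intro hS
    have hzero : colorMap n p q - ν = 0 := by
      apply zeta_inj
      intro S
      simp only [Pi.sub_apply]
      rw [Finset.sum_sub_distrib, hmom S, hS S, sub_self]
    exact sub_eq_zero.1 hzero
end

section
/- Let n ≥ 1, let p ∈ ℝ, and let S, T ⊆ [n]. Then Σ_{S' ⊆ S} (−p)^{|S|−|S'|} p^{|S'∖T| + min(1,|S'∩T|)} equals p(1−p)^{|S|} + (−p)^{|S|}(1−p) if S ⊆ T, and equals 0 otherwise. -/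
open Finset

private lemma aux_sum {α : Type*} [DecidableEq α] (p : ℝ) (T S : Finset α) :
    ∑ S' ∈ S.powerset, (-p) ^ (S.card - S'.card) * p ^ (S' \ T).card
      = if S ⊆ T then (1 - p) ^ S.card else 0 := by
  induction S using Finset.induction_on with
  | empty => simp
  | @insert a S ha ih =>
    rw [Finset.sum_powerset_insert ha]
    have hc : (insert a S).card = S.card + 1 := Finset.card_insert_of_notMem ha
    have h1 : ∑ S' ∈ S.powerset, (-p) ^ ((insert a S).card - S'.card) * p ^ (S' \ T).card
        = (-p) * ∑ S' ∈ S.powerset, (-p) ^ (S.card - S'.card) * p ^ (S' \ T).card := by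
      rw [Finset.mul_sum]
      refine Finset.sum_congr rfl fun S' hS' => ?_
      have hle : S'.card ≤ S.card := Finset.card_le_card (Finset.mem_powerset.mp hS')
      rw [hc, Nat.succ_sub hle, pow_succ]
      ring
    by_cases haT : a ∈ T
    · have h2 : ∑ S' ∈ S.powerset,
          (-p) ^ ((insert a S).card - (insert a S').card) * p ^ ((insert a S' \ T).card)
          = ∑ S' ∈ S.powerset, (-p) ^ (S.card - S'.card) * p ^ (S' \ T).card := by
        refine Finset.sum_congr rfl fun S' hS' => ?_
        have haS' : a ∉ S' := fun h => ha (Finset.mem_powerset.mp hS' h)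
        rw [hc, Finset.card_insert_of_notMem haS', Nat.succ_sub_succ,
          Finset.insert_sdiff_of_mem _ haT]
      rw [h1, h2, ih, hc]
      have hsub : insert a S ⊆ T ↔ S ⊆ T := by
        simp [Finset.insert_subset_iff, haT]
      by_cases hST : S ⊆ T
      · rw [if_pos hST, if_pos (hsub.mpr hST), pow_succ]
        ring
      · rw [if_neg hST, if_neg (fun h => hST (hsub.mp h))]
        ring
    · have h2 : ∑ S' ∈ S.powerset,
          (-p) ^ ((insert a S).card - (insert a S').card) * p ^ ((insert a S' \ T).card)
          = p * ∑ S' ∈ S.powerset, (-p) ^ (S.card - S'.card) * p ^ (S' \ T).card := by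
        rw [Finset.mul_sum]
        refine Finset.sum_congr rfl fun S' hS' => ?_
        have haS' : a ∉ S' := fun h => ha (Finset.mem_powerset.mp hS' h)
        rw [hc, Finset.card_insert_of_notMem haS', Nat.succ_sub_succ,
          Finset.insert_sdiff_of_notMem _ haT,
          Finset.card_insert_of_notMem (fun h => haS' (Finset.mem_sdiff.mp h).1), pow_succ]
        ring
      rw [h1, h2]
      have : ¬ insert a S ⊆ T := fun h => haT (h (Finset.mem_insert_self a S))
      rw [if_neg this]
      ring

/-- `Σ_{S' ⊆ S} (-p)^{|S|-|S'|} p^{|S'∖T| + min(1,|S'∩T|)}` equals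
`p(1-p)^{|S|} + (-p)^{|S|}(1-p)` if `S ⊆ T`, and `0` otherwise. -/
theorem powerset_sum_eval (n : ℕ) (hn : 1 ≤ n) (p : ℝ) (S T : Finset (Fin n)) :
    ∑ S' ∈ S.powerset, (-p) ^ (S.card - S'.card) * p ^ ((S' \ T).card + min 1 (S' ∩ T).card)
      = if S ⊆ T then p * (1 - p) ^ S.card + (-p) ^ S.card * (1 - p) else 0 := by
  induction S using Finset.induction_on with
  | empty => simp
  | @insert a S ha ih =>
    rw [Finset.sum_powerset_insert ha]
    have hc : (insert a S).card = S.card + 1 := Finset.card_insert_of_notMem ha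
    have h1 : ∑ S' ∈ S.powerset, (-p) ^ ((insert a S).card - S'.card)
          * p ^ ((S' \ T).card + min 1 (S' ∩ T).card)
        = (-p) * ∑ S' ∈ S.powerset, (-p) ^ (S.card - S'.card)
          * p ^ ((S' \ T).card + min 1 (S' ∩ T).card) := by
      rw [Finset.mul_sum]
      refine Finset.sum_congr rfl fun S' hS' => ?_
      have hle : S'.card ≤ S.card := Finset.card_le_card (Finset.mem_powerset.mp hS')
      rw [hc, Nat.succ_sub hle, pow_succ]
      ring
    by_cases haT : a ∈ T
    · have h2 : ∑ S' ∈ S.powerset, (-p) ^ ((insert a S).card - (insert a S').card)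
            * p ^ ((insert a S' \ T).card + min 1 (insert a S' ∩ T).card)
          = p * ∑ S' ∈ S.powerset, (-p) ^ (S.card - S'.card) * p ^ (S' \ T).card := by
        rw [Finset.mul_sum]
        refine Finset.sum_congr rfl fun S' hS' => ?_
        have haS' : a ∉ S' := fun h => ha (Finset.mem_powerset.mp hS' h)
        have hmin : min 1 (insert a S' ∩ T).card = 1 := by
          have : a ∈ insert a S' ∩ T := Finset.mem_inter.mpr ⟨Finset.mem_insert_self a S', haT⟩
          have hpos : 0 < (insert a S' ∩ T).card := Finset.card_pos.mpr ⟨a, this⟩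
          omega
        rw [hc, Finset.card_insert_of_notMem haS', Nat.succ_sub_succ,
          Finset.insert_sdiff_of_mem _ haT, hmin, pow_succ]
        ring
      rw [h1, h2, ih, aux_sum]
      have hsub : insert a S ⊆ T ↔ S ⊆ T := by
        simp [Finset.insert_subset_iff, haT]
      by_cases hST : S ⊆ T
      · rw [if_pos hST, if_pos hST, if_pos (hsub.mpr hST), hc, pow_succ, pow_succ]
        ring
      · rw [if_neg hST, if_neg hST, if_neg (fun h => hST (hsub.mp h))]
        ring
    · have h2 : ∑ S' ∈ S.powerset, (-p) ^ ((insert a S).card - (insert a S').card)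
            * p ^ ((insert a S' \ T).card + min 1 (insert a S' ∩ T).card)
          = p * ∑ S' ∈ S.powerset, (-p) ^ (S.card - S'.card)
            * p ^ ((S' \ T).card + min 1 (S' ∩ T).card) := by
        rw [Finset.mul_sum]
        refine Finset.sum_congr rfl fun S' hS' => ?_
        have haS' : a ∉ S' := fun h => ha (Finset.mem_powerset.mp hS' h)
        rw [hc, Finset.card_insert_of_notMem haS', Nat.succ_sub_succ,
          Finset.insert_sdiff_of_notMem _ haT,
          Finset.card_insert_of_notMem (fun h => haS' (Finset.mem_sdiff.mp h).1),
          Finset.insert_inter_of_notMem haT]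
        rw [show (S' \ T).card + 1 + min 1 (S' ∩ T).card
            = ((S' \ T).card + min 1 (S' ∩ T).card) + 1 by omega, pow_succ]
        ring
      rw [h1, h2]
      have : ¬ insert a S ⊆ T := fun h => haT (h (Finset.mem_insert_self a S))
      rw [if_neg this]
      ring
end

section
/- Let n ≥ 1. Let Q^Inv ⊆ ℝ^{B_n} and V^Inv ⊆ ℝ^{{0,1}^n} be the subspaces of vectors invariant under the natural action of the symmetric group S_n. Then the restriction A^Inv_{n,1/2} of A_{n,1/2} to Q^Inv has rank ⌊n/2⌋ + 1 (so its kernel has dimension P_n − ⌊n/2⌋ − 1, where P_n is the number of integer partitions of n), and its range is exactly the set of ν ∈ V^Inv whose level sums ν_k := Σ_{ρ with exactly k ones} ν(ρ) satisfy ν_k = ν_{n−k} for all k = 0,…,n. -/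
open Finset

/-- The subspace of `S_n`-invariant vectors in `ℝ^{B_n}`: `q` is invariant when its value
agrees on any two partitions related by a permutation of `[n]`. -/
def QInv (n : ℕ) : Submodule ℝ (Finpartition (univ : Finset (Fin n)) → ℝ) where
  carrier := {q | ∀ g : Equiv.Perm (Fin n), ∀ σ τ : Finpartition (univ : Finset (Fin n)),
    τ.parts = σ.parts.image (fun B => B.image g) → q τ = q σ}
  add_mem' := by
    intro a b ha hb g σ τ h
    simp only [Pi.add_apply, ha g σ τ h, hb g σ τ h]
  zero_mem' := by intro g σ τ h; rfl
  smul_mem' := by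
    intro c a ha g σ τ h
    simp only [Pi.smul_apply, ha g σ τ h]

/-- `ν` (as a vector on `{0,1}^n`) is invariant under the natural `S_n`-action. -/
def VInvariant {n : ℕ} (ν : (Fin n → Bool) → ℝ) : Prop :=
  ∀ g : Equiv.Perm (Fin n), ∀ ρ : Fin n → Bool, ν (ρ ∘ g) = ν ρ

/-- The level sum `ν_k`: total mass of configurations with exactly `k` ones. -/
def levelSum {n : ℕ} (ν : (Fin n → Bool) → ℝ) (k : ℕ) : ℝ :=
  ∑ ρ ∈ univ.filter
    (fun ρ : Fin n → Bool => (univ.filter fun i => ρ i = true).card = k), ν ρ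


namespace DCProof
open Finset

abbrev FP (n : ℕ) := Finpartition (univ : Finset (Fin n))

/-- multiset of block sizes -/
def sz {n : ℕ} (σ : FP n) : Multiset ℕ := σ.parts.val.map Finset.card

/-- number of ones -/
abbrev lvl {n : ℕ} (ρ : Fin n → Bool) : ℕ := (univ.filter fun i => ρ i = true).card

lemma colorMatrix_half (n : ℕ) (ρ : Fin n → Bool) (σ : FP n) :
    colorMatrix n (1/2) ρ σ =
      if ∀ B ∈ σ.parts, ∀ i ∈ B, ∀ j ∈ B, ρ i = ρ j then ((1:ℝ)/2) ^ σ.parts.card else 0 := by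
  unfold colorMatrix
  split
  · have h1 : (1 : ℝ) - 1/2 = 1/2 := by norm_num
    rw [h1, ← pow_add, Nat.add_sub_cancel' (Finset.card_filter_le _ _)]
  · rfl

lemma colorMap_apply (n : ℕ) (p : ℝ) (q : FP n → ℝ) (ρ : Fin n → Bool) :
    colorMap n p q ρ = ∑ σ : FP n, colorMatrix n p ρ σ * q σ := by
  simp [colorMap, Matrix.mulVecLin_apply, Matrix.mulVec, dotProduct]

lemma levelSum_add {n : ℕ} (ν μ : (Fin n → Bool) → ℝ) (k : ℕ) :
    levelSum (ν + μ) k = levelSum ν k + levelSum μ k := by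
  simp [levelSum, Finset.sum_add_distrib]

lemma levelSum_smul {n : ℕ} (c : ℝ) (ν : (Fin n → Bool) → ℝ) (k : ℕ) :
    levelSum (c • ν) k = c * levelSum ν k := by
  simp [levelSum, Finset.mul_sum]

lemma lvl_le {n : ℕ} (ρ : Fin n → Bool) : lvl ρ ≤ n := by
  simpa using Finset.card_filter_le univ (fun i => ρ i = true)

lemma lvl_flip {n : ℕ} (ρ : Fin n → Bool) : lvl (fun i => !(ρ i)) = n - lvl ρ := by
  have h : (univ.filter fun i => (!(ρ i)) = true) = univ \ (univ.filter fun i => ρ i = true) := by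
    ext i; simp
  rw [show lvl (fun i => !(ρ i)) = (univ.filter fun i => (!(ρ i)) = true).card from rfl, h,
    Finset.card_sdiff_of_subset (Finset.filter_subset _ _)]
  simp

end DCProof
namespace DCProof
open Finset

lemma sum_colorMatrix_flip (n : ℕ) (σ : FP n) (k : ℕ) (hk : k ≤ n) :
    ∑ ρ ∈ univ.filter (fun ρ : Fin n → Bool => lvl ρ = k), colorMatrix n (1/2) ρ σ
      = ∑ ρ ∈ univ.filter (fun ρ : Fin n → Bool => lvl ρ = n - k), colorMatrix n (1/2) ρ σ := by
  apply Finset.sum_nbij' (i := fun ρ => fun i => !(ρ i)) (j := fun ρ => fun i => !(ρ i))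
  · intro ρ hρ
    simp only [Finset.mem_filter, Finset.mem_univ, true_and] at hρ ⊢
    rw [lvl_flip, hρ]
  · intro ρ hρ
    simp only [Finset.mem_filter, Finset.mem_univ, true_and] at hρ ⊢
    rw [lvl_flip, hρ, Nat.sub_sub_self hk]
  · intro ρ _; funext i; simp
  · intro ρ _; funext i; simp
  · intro ρ _
    rw [colorMatrix_half, colorMatrix_half]
    apply if_congr _ rfl rfl
    apply forall₂_congr; intro B _
    constructor
    · intro h i hi j hj; rw [h i hi j hj]
    · intro h i hi j hj; exact Bool.not_inj (h i hi j hj)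

lemma levelSum_colorMap_symm (n : ℕ) (q : FP n → ℝ) (k : ℕ) (hk : k ≤ n) :
    levelSum (colorMap n (1/2) q) k = levelSum (colorMap n (1/2) q) (n - k) := by
  unfold levelSum
  simp only [colorMap_apply]
  rw [Finset.sum_comm, Finset.sum_comm (s := univ.filter (fun ρ : Fin n → Bool => lvl ρ = n - k))]
  apply Finset.sum_congr rfl
  intro σ _
  rw [← Finset.sum_mul, ← Finset.sum_mul, sum_colorMatrix_flip n σ k hk]

end DCProof
namespace DCProof
open Finset

def permPart {n : ℕ} (g : Equiv.Perm (Fin n)) (σ : FP n) : FP n where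
  parts := σ.parts.image (fun B => B.image g)
  supIndep := by
    rw [Finset.supIndep_iff_pairwiseDisjoint]
    rintro a ha b hb hab
    simp only [Finset.coe_image, Set.mem_image, Finset.mem_coe] at ha hb
    obtain ⟨B, hB, rfl⟩ := ha
    obtain ⟨C, hC, rfl⟩ := hb
    simp only [Function.onFun, id_eq]
    rw [Finset.disjoint_image g.injective]
    exact σ.disjoint hB hC (fun h => hab (by rw [h]))
  sup_parts := by
    refine Finset.eq_univ_iff_forall.mpr fun x => ?_
    rw [Finset.mem_sup]
    have hx : g.symm x ∈ (univ : Finset (Fin n)) := mem_univ _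
    rw [← σ.sup_parts, Finset.mem_sup] at hx
    obtain ⟨B, hB, hxB⟩ := hx
    exact ⟨B.image g, Finset.mem_image_of_mem _ hB,
      Finset.mem_image.2 ⟨g.symm x, hxB, g.apply_symm_apply x⟩⟩
  bot_notMem := fun h => by
    rw [Finset.bot_eq_empty, Finset.mem_image] at h
    obtain ⟨B, hB, hBe⟩ := h
    rw [Finset.image_eq_empty] at hBe
    exact σ.bot_notMem (by rw [Finset.bot_eq_empty, ← hBe]; exact hB)

lemma permPart_parts {n : ℕ} (g : Equiv.Perm (Fin n)) (σ : FP n) :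
    (permPart g σ).parts = σ.parts.image (fun B => B.image g) := rfl

lemma permPart_symm {n : ℕ} (g : Equiv.Perm (Fin n)) (σ : FP n) :
    permPart g⁻¹ (permPart g σ) = σ := by
  apply Finpartition.ext
  rw [permPart_parts, permPart_parts, Finset.image_image]
  have h : ∀ B ∈ σ.parts, ((fun B => Finset.image (⇑g⁻¹) B) ∘ fun B => Finset.image (⇑g) B) B = id B := by
    intro B _
    simp only [Function.comp_apply, Finset.image_image, id_eq]
    ext x
    simp
  rw [Finset.image_congr h, Finset.image_id]

def permPartEquiv {n : ℕ} (g : Equiv.Perm (Fin n)) : FP n ≃ FP n where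
  toFun := permPart g
  invFun := permPart g⁻¹
  left_inv := permPart_symm g
  right_inv := fun σ => by
    have := permPart_symm g⁻¹ σ
    rwa [inv_inv] at this

lemma colorMatrix_perm (n : ℕ) (p : ℝ) (g : Equiv.Perm (Fin n)) (ρ : Fin n → Bool) (σ : FP n) :
    colorMatrix n p (ρ ∘ g) σ = colorMatrix n p ρ (permPart g σ) := by
  unfold colorMatrix
  rw [permPart_parts]
  have hinj : Function.Injective (fun B : Finset (Fin n) => B.image ⇑g) :=
    Finset.image_injective g.injective
  have hcond : (∀ B ∈ σ.parts.image (fun B => B.image ⇑g), ∀ i ∈ B, ∀ j ∈ B, ρ i = ρ j)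
      ↔ ∀ B ∈ σ.parts, ∀ i ∈ B, ∀ j ∈ B, (ρ ∘ g) i = (ρ ∘ g) j := by
    rw [Finset.forall_mem_image]
    apply forall₂_congr; intro B _
    constructor
    · intro h i hi j hj
      exact h _ (Finset.mem_image_of_mem _ hi) _ (Finset.mem_image_of_mem _ hj)
    · intro h i hi j hj
      simp only [Finset.mem_image] at hi hj
      obtain ⟨a, ha, rfl⟩ := hi; obtain ⟨b, hb, rfl⟩ := hj
      exact h a ha b hb
  have hfilter : (σ.parts.image (fun B => B.image ⇑g)).filter (fun B => ∀ i ∈ B, ρ i = true)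
      = (σ.parts.filter (fun B => ∀ i ∈ B, (ρ ∘ g) i = true)).image (fun B => B.image ⇑g) := by
    rw [Finset.filter_image]
    congr 1
    apply Finset.filter_congr
    intro B _
    simp [Finset.forall_mem_image]
  rw [hfilter, Finset.card_image_of_injective _ hinj, Finset.card_image_of_injective _ hinj]
  exact (if_congr hcond rfl rfl).symm

lemma vInvariant_colorMap (n : ℕ) (p : ℝ) (q : FP n → ℝ) (hq : q ∈ QInv n) :
    VInvariant (colorMap n p q) := by
  intro g ρ
  rw [colorMap_apply, colorMap_apply,
    ← Equiv.sum_comp (permPartEquiv g) (fun σ => colorMatrix n p ρ σ * q σ)]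
  apply Finset.sum_congr rfl
  intro σ _
  have h1 : colorMatrix n p (ρ ∘ g) σ = colorMatrix n p ρ (permPartEquiv g σ) :=
    colorMatrix_perm n p g ρ σ
  have h2 : q (permPartEquiv g σ) = q σ := hq g σ (permPart g σ) rfl
  rw [h1, h2]

end DCProof
namespace DCProof
open Finset

lemma vInvariant_eq_of_lvl {n : ℕ} (ν : (Fin n → Bool) → ℝ) (hν : VInvariant ν)
    (ρ ρ' : Fin n → Bool) (h : lvl ρ = lvl ρ') : ν ρ = ν ρ' := by
  classical
  have c1 : Fintype.card {x // ρ' x = true} = Fintype.card {x // ρ x = true} := by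
    rw [Fintype.card_subtype, Fintype.card_subtype]; exact h.symm
  have c2 : Fintype.card {x // ¬ ρ' x = true} = Fintype.card {x // ¬ ρ x = true} := by
    rw [Fintype.card_subtype_compl, Fintype.card_subtype_compl, c1]
  let e₁ := Fintype.equivOfCardEq c1
  let e₂ := Fintype.equivOfCardEq c2
  let g : Equiv.Perm (Fin n) :=
    (Equiv.sumCompl (fun x => ρ' x = true)).symm.trans
      ((e₁.sumCongr e₂).trans (Equiv.sumCompl (fun x => ρ x = true)))
  have hg : ρ ∘ g = ρ' := by
    funext x
    by_cases hx : ρ' x = true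
    · have h1 : (Equiv.sumCompl (fun x => ρ' x = true)).symm x = Sum.inl ⟨x, hx⟩ := by
        rw [Equiv.symm_apply_eq, Equiv.sumCompl_apply_inl]
      have : (ρ ∘ g) x = ρ ((e₁ ⟨x, hx⟩ : {x // ρ x = true}) : Fin n) := by
        simp only [g, Function.comp_apply, Equiv.trans_apply, h1, Equiv.sumCongr_apply,
          Sum.map_inl, Equiv.sumCompl_apply_inl]
      rw [this, (e₁ ⟨x, hx⟩).2, hx]
    · have h1 : (Equiv.sumCompl (fun x => ρ' x = true)).symm x = Sum.inr ⟨x, hx⟩ := by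
        rw [Equiv.symm_apply_eq, Equiv.sumCompl_apply_inr]
      have h2 : (ρ ∘ g) x = ρ ((e₂ ⟨x, hx⟩ : {x // ¬ ρ x = true}) : Fin n) := by
        simp only [g, Function.comp_apply, Equiv.trans_apply, h1, Equiv.sumCongr_apply,
          Sum.map_inr, Equiv.sumCompl_apply_inr]
      have h3 : ¬ ρ ((e₂ ⟨x, hx⟩ : {x // ¬ ρ x = true}) : Fin n) = true := (e₂ ⟨x, hx⟩).2
      have hx' : ρ' x = false := by simpa using hx
      have h3' : ρ ((e₂ ⟨x, hx⟩ : {x // ¬ ρ x = true}) : Fin n) = false := by simpa using h3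
      rw [h2, h3', hx']
  have := hν g ρ
  rw [hg] at this
  exact this.symm

def WSub (n : ℕ) : Submodule ℝ ((Fin n → Bool) → ℝ) where
  carrier := {ν : (Fin n → Bool) → ℝ | VInvariant ν ∧
        ∀ k ≤ n, levelSum ν k = levelSum ν (n - k)}
  add_mem' := by
    rintro a b ⟨ha1, ha2⟩ ⟨hb1, hb2⟩
    refine ⟨fun g ρ => ?_, fun k hk => by
      rw [levelSum_add, levelSum_add, ha2 k hk, hb2 k hk]⟩
    simp only [Pi.add_apply, ha1 g ρ, hb1 g ρ]
  zero_mem' := ⟨fun g ρ => rfl, fun k hk => by simp [levelSum]⟩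
  smul_mem' := by
    rintro c a ⟨ha1, ha2⟩
    refine ⟨fun g ρ => ?_, fun k hk => by rw [levelSum_smul, levelSum_smul, ha2 k hk]⟩
    simp only [Pi.smul_apply, ha1 g ρ]

noncomputable def lvlMap (n : ℕ) : ((Fin n → Bool) → ℝ) →ₗ[ℝ] (Fin (n/2+1) → ℝ) where
  toFun ν := fun k => levelSum ν (k : ℕ)
  map_add' ν μ := by funext k; exact levelSum_add ν μ (k : ℕ)
  map_smul' c ν := by funext k; exact levelSum_smul c ν (k : ℕ)

lemma lvlMap_inj_on_W (n : ℕ) (ν : (Fin n → Bool) → ℝ) (hW : ν ∈ WSub n)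
    (h0 : lvlMap n ν = 0) : ν = 0 := by
  obtain ⟨hinv, hsymm⟩ := hW
  have hlev : ∀ k ≤ n, levelSum ν k = 0 := by
    intro k hk
    by_cases hk2 : k ≤ n / 2
    · have : ((⟨k, Nat.lt_succ_of_le hk2⟩ : Fin (n/2+1)) : ℕ) = k := rfl
      have := congrFun h0 ⟨k, Nat.lt_succ_of_le hk2⟩
      simpa [lvlMap] using this
    · push_neg at hk2
      have hnk : n - k ≤ n / 2 := by omega
      have h1 : levelSum ν (n - k) = 0 := by
        have := congrFun h0 ⟨n - k, Nat.lt_succ_of_le hnk⟩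
        simpa [lvlMap] using this
      rw [hsymm k hk, h1]
  funext ρ
  have hρn : lvl ρ ≤ n := lvl_le ρ
  have hconst : ∀ ρ' ∈ univ.filter (fun ρ' : Fin n → Bool => lvl ρ' = lvl ρ), ν ρ' = ν ρ := by
    intro ρ' hρ'
    simp only [Finset.mem_filter] at hρ'
    exact vInvariant_eq_of_lvl ν hinv ρ' ρ hρ'.2
  have hsum : levelSum ν (lvl ρ) =
      (univ.filter (fun ρ' : Fin n → Bool => lvl ρ' = lvl ρ)).card • ν ρ := by
    rw [levelSum, Finset.sum_congr rfl hconst, Finset.sum_const]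
  have hmem : ρ ∈ univ.filter (fun ρ' : Fin n → Bool => lvl ρ' = lvl ρ) := by simp
  have hpos : 0 < (univ.filter (fun ρ' : Fin n → Bool => lvl ρ' = lvl ρ)).card :=
    Finset.card_pos.2 ⟨ρ, hmem⟩
  have := hlev (lvl ρ) hρn
  rw [hsum] at this
  simp only [nsmul_eq_mul, Pi.zero_apply] at this ⊢
  rcases mul_eq_zero.mp this with h | h
  · exact absurd h (by positivity)
  · exact h

end DCProof
namespace DCProof
open Finset

def lam (n j : ℕ) : Multiset ℕ := (n - j) ::ₘ Multiset.replicate j 1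

noncomputable def qgen (n j : ℕ) : FP n → ℝ := fun σ => if sz σ = lam n j then 1 else 0

lemma sz_eq_of_image {n : ℕ} (g : Equiv.Perm (Fin n)) (σ τ : FP n)
    (h : τ.parts = σ.parts.image (fun B => B.image g)) : sz τ = sz σ := by
  have hinj : Function.Injective (fun B : Finset (Fin n) => B.image ⇑g) :=
    Finset.image_injective g.injective
  rw [sz, sz, h, Finset.image_val_of_injOn (hinj.injOn), Multiset.map_map]
  apply Multiset.map_congr rfl
  intro B _
  exact Finset.card_image_of_injective B g.injective

lemma qgen_mem (n j : ℕ) : qgen n j ∈ QInv n := by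
  intro g σ τ h
  rw [qgen, qgen, sz_eq_of_image g σ τ h]

lemma colorMatrix_half_nonneg (n : ℕ) (ρ : Fin n → Bool) (σ : FP n) :
    0 ≤ colorMatrix n (1/2) ρ σ := by
  rw [colorMatrix_half]
  split
  · positivity
  · exact le_refl _

lemma exists_big_block {n j : ℕ} (σ : FP n) (hσ : sz σ = lam n j) :
    ∃ B ∈ σ.parts, B.card = n - j := by
  have hmem : n - j ∈ sz σ := by rw [hσ]; exact Multiset.mem_cons_self _ _
  rw [sz] at hmem
  obtain ⟨B, hB, h⟩ := Multiset.mem_map.mp hmem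
  exact ⟨B, hB, h⟩

lemma colorMatrix_zero_of_lvl_gt {n j k : ℕ} (hn : 1 ≤ n) (hj : j ≤ n/2) (hk : k ≤ n/2)
    (hjk : j < k) (σ : FP n) (hσ : sz σ = lam n j) (ρ : Fin n → Bool) (hρ : lvl ρ = k) :
    colorMatrix n (1/2) ρ σ = 0 := by
  rw [colorMatrix_half, if_neg]
  intro hconst
  obtain ⟨B, hB, hcard⟩ := exists_big_block σ hσ
  have hBne : B.Nonempty := σ.nonempty_of_mem_parts hB
  obtain ⟨b, hb⟩ := hBne
  by_cases hbρ : ρ b = true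
  · have hsub : B ⊆ univ.filter (fun i => ρ i = true) := by
      intro i hi
      simp only [Finset.mem_filter, Finset.mem_univ, true_and]
      rw [hconst B hB i hi b hb]
      exact hbρ
    have hle := Finset.card_le_card hsub
    rw [hcard] at hle
    have hle2 : n - j ≤ k := by rw [← hρ]; exact hle
    omega
  · have hsub : univ.filter (fun i => ρ i = true) ⊆ univ \ B := by
      intro i hi
      simp only [Finset.mem_filter, Finset.mem_univ, true_and] at hi
      simp only [Finset.mem_sdiff, Finset.mem_univ, true_and]
      intro hiB
      exact hbρ (by rw [hconst B hB b hb i hiB]; exact hi)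
    have hle := Finset.card_le_card hsub
    rw [Finset.card_sdiff_of_subset (Finset.subset_univ B), Finset.card_univ, Fintype.card_fin, hcard] at hle
    have hle2 : k ≤ n - (n - j) := by rw [← hρ]; exact hle
    omega

lemma exists_finpartition_lam (n j : ℕ) (hn : 1 ≤ n) (hj : j ≤ n/2) :
    ∃ σ : FP n, sz σ = lam n j := by
  have hle : n - j ≤ (univ : Finset (Fin n)).card := by
    rw [Finset.card_univ, Fintype.card_fin]; omega
  obtain ⟨B, hBs, hBcard⟩ := Finset.exists_subset_card_eq hle
  have hBpos : 0 < B.card := by rw [hBcard]; omega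
  have hBne : B ≠ (⊥ : Finset (Fin n)) := by
    rw [Finset.bot_eq_empty, ← Finset.nonempty_iff_ne_empty, ← Finset.card_pos]
    exact hBpos
  have hdisj : Disjoint (univ \ B) B := Finset.sdiff_disjoint
  have hsup : (univ \ B) ⊔ B = univ := by
    rw [Finset.sup_eq_union]; exact Finset.sdiff_union_of_subset hBs
  refine ⟨(⊥ : Finpartition (univ \ B)).extend hBne hdisj hsup, ?_⟩
  have hnotmem : B ∉ (⊥ : Finpartition (univ \ B)).parts := by
    intro hmem
    have hle' := Finpartition.le (⊥ : Finpartition (univ \ B)) hmem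
    obtain ⟨b, hb⟩ : B.Nonempty := Finset.card_pos.mp hBpos
    have := hle' hb
    rw [Finset.mem_sdiff] at this
    exact this.2 hb
  have hparts : ((⊥ : Finpartition (univ \ B)).extend hBne hdisj hsup).parts
      = insert B (⊥ : Finpartition (univ \ B)).parts := rfl
  rw [sz, hparts, Finset.insert_val_of_notMem hnotmem, Multiset.map_cons, hBcard]
  rw [lam]
  congr 1
  rw [Finpartition.parts_bot, Finset.map_val, Multiset.map_map]
  have h1 : (Finset.card ∘ ⇑(⟨singleton, Finset.singleton_injective⟩ :
      Fin n ↪ Finset (Fin n))) = fun _ => 1 := by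
    funext a
    simp
  rw [h1, Multiset.map_const']
  have h2 : Multiset.card (univ \ B).val = j := by
    show (univ \ B).card = j
    rw [Finset.card_sdiff_of_subset hBs, Finset.card_univ, Fintype.card_fin, hBcard]
    omega
  rw [h2]

end DCProof
namespace DCProof
open Finset

lemma rho0_spec {n : ℕ} (σ : FP n) (B0 : Finset (Fin n)) (hB0 : B0 ∈ σ.parts) :
    (∀ B ∈ σ.parts, ∀ i ∈ B, ∀ j ∈ B, (fun i => decide (i ∉ B0)) i = (fun i => decide (i ∉ B0)) j)
      ∧ lvl (fun i => decide (i ∉ B0)) = n - B0.card := by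
  constructor
  · intro C hC i hi j hj
    simp only [decide_eq_decide]
    by_cases hCeq : C = B0
    · subst hCeq
      simp [hi, hj]
    · have hd0 := σ.disjoint hC hB0 hCeq
      have hd : Disjoint C B0 := hd0
      rw [Finset.disjoint_left] at hd
      simp [hd hi, hd hj]
  · have hfilt : (univ.filter fun i => (fun i => decide (i ∉ B0)) i = true) = univ \ B0 := by
      ext i; simp
    show (univ.filter fun i => (fun i => decide (i ∉ B0)) i = true).card = n - B0.card
    rw [hfilt, Finset.card_sdiff_of_subset (Finset.subset_univ _), Finset.card_univ, Fintype.card_fin]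

lemma E_expand (n j k : ℕ) :
    levelSum (colorMap n (1/2) (qgen n j)) k
      = ∑ ρ ∈ univ.filter (fun ρ : Fin n → Bool => lvl ρ = k),
          ∑ σ ∈ univ.filter (fun σ : FP n => sz σ = lam n j), colorMatrix n (1/2) ρ σ := by
  rw [levelSum]
  apply Finset.sum_congr rfl
  intro ρ _
  rw [colorMap_apply, Finset.sum_filter]
  apply Finset.sum_congr rfl
  intro σ _
  rw [qgen]
  split <;> simp

lemma E_zero {n j k : ℕ} (hn : 1 ≤ n) (hj : j ≤ n/2) (hk : k ≤ n/2) (hjk : j < k) :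
    levelSum (colorMap n (1/2) (qgen n j)) k = 0 := by
  rw [E_expand]
  apply Finset.sum_eq_zero
  intro ρ hρ
  simp only [Finset.mem_filter, Finset.mem_univ, true_and] at hρ
  apply Finset.sum_eq_zero
  intro σ hσ
  simp only [Finset.mem_filter, Finset.mem_univ, true_and] at hσ
  exact colorMatrix_zero_of_lvl_gt hn hj hk hjk σ hσ ρ hρ

lemma E_pos {n j : ℕ} (hn : 1 ≤ n) (hj : j ≤ n/2) :
    0 < levelSum (colorMap n (1/2) (qgen n j)) j := by
  rw [E_expand]
  obtain ⟨σ0, hσ0⟩ := exists_finpartition_lam n j hn hj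
  obtain ⟨B0, hB0, hB0card⟩ := exists_big_block σ0 hσ0
  obtain ⟨hconst, hlvl⟩ := rho0_spec σ0 B0 hB0
  have hlvlj : lvl (fun i => decide (i ∉ B0)) = j := by rw [hlvl, hB0card]; omega
  apply Finset.sum_pos'
  · intro ρ _
    exact Finset.sum_nonneg fun σ _ => colorMatrix_half_nonneg n ρ σ
  · refine ⟨(fun i => decide (i ∉ B0)), Finset.mem_filter.mpr ⟨Finset.mem_univ _, hlvlj⟩, ?_⟩
    apply Finset.sum_pos'
    · intro σ _
      exact colorMatrix_half_nonneg n _ σ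
    · refine ⟨σ0, Finset.mem_filter.mpr ⟨Finset.mem_univ _, hσ0⟩, ?_⟩
      rw [colorMatrix_half, if_pos hconst]
      positivity

end DCProof
namespace DCProof
open Finset

lemma exists_finpartition_of_sizes {n : ℕ} (M : Multiset ℕ) :
    ∀ (s : Finset (Fin n)), (∀ x ∈ M, 0 < x) → M.sum = s.card →
      ∃ P : Finpartition s, P.parts.val.map Finset.card = M := by
  induction M using Multiset.induction_on with
  | empty =>
    intro s _ hsum
    have hs : s = ∅ := by
      rw [← Finset.card_eq_zero]
      simpa using hsum.symm
    refine ⟨⟨∅, Finset.supIndep_empty _, ?_, Finset.notMem_empty _⟩, by simp⟩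
    rw [Finset.sup_empty, hs]
    exact Finset.bot_eq_empty
  | cons a M ih =>
    intro s hpos hsum
    rw [Multiset.sum_cons] at hsum
    have ha : 0 < a := hpos a (Multiset.mem_cons_self _ _)
    have hle : a ≤ s.card := by omega
    obtain ⟨B, hBs, hBcard⟩ := Finset.exists_subset_card_eq hle
    obtain ⟨P, hP⟩ := ih (s \ B) (fun x hx => hpos x (Multiset.mem_cons_of_mem hx))
      (by rw [Finset.card_sdiff_of_subset hBs]; omega)
    have hBne : B ≠ (⊥ : Finset (Fin n)) := by
      rw [Finset.bot_eq_empty, ← Finset.nonempty_iff_ne_empty, ← Finset.card_pos]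
      omega
    have hdisj : Disjoint (s \ B) B := Finset.sdiff_disjoint
    have hsup : (s \ B) ⊔ B = s := by
      rw [Finset.sup_eq_union]; exact Finset.sdiff_union_of_subset hBs
    refine ⟨P.extend hBne hdisj hsup, ?_⟩
    have hnotmem : B ∉ P.parts := by
      intro hmem
      have hle' := P.le hmem
      obtain ⟨b, hb⟩ : B.Nonempty := Finset.card_pos.mp (by omega)
      have := hle' hb
      rw [Finset.mem_sdiff] at this
      exact this.2 hb
    have hparts : (P.extend hBne hdisj hsup).parts = insert B P.parts := rfl
    rw [hparts, Finset.insert_val_of_notMem hnotmem, Multiset.map_cons, hBcard, hP]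

lemma finsetEquivOfMapEq {α β : Type*} [DecidableEq α] [DecidableEq β] {s t : Finset α}
    (f : α → β) (h : s.val.map f = t.val.map f) :
    ∃ e : ↥s ≃ ↥t, ∀ x : ↥s, f ((e x) : α) = f (x : α) := by
  have hcard : ∀ b : β, Fintype.card {x : ↥s // f ↑x = b} = Fintype.card {x : ↥t // f ↑x = b} := by
    intro b
    have key : ∀ (u : Finset α), Fintype.card {x : ↥u // f ↑x = b}
        = (u.filter (fun a => b = f a)).card := by
      intro u
      have e1 : {x : ↥u // f ↑x = b} ≃ ↥(u.filter (fun a => b = f a)) :=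
        { toFun := fun x => ⟨x.1.1, Finset.mem_filter.mpr ⟨x.1.2, x.2.symm⟩⟩
          invFun := fun x => ⟨⟨x.1, (Finset.mem_filter.mp x.2).1⟩,
            (Finset.mem_filter.mp x.2).2.symm⟩
          left_inv := fun x => rfl
          right_inv := fun x => rfl }
      rw [Fintype.card_congr e1, Fintype.card_coe]
    rw [key s, key t]
    have hcount := congrArg (Multiset.count b) h
    rw [Multiset.count_map, Multiset.count_map] at hcount
    exact hcount
  exact ⟨Equiv.ofFiberEquiv (f := fun x : ↥s => f ↑x) (g := fun x : ↥t => f ↑x)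
      (fun b => Fintype.equivOfCardEq (hcard b)), fun x => Equiv.ofFiberEquiv_map
        (f := fun x : ↥s => f ↑x) (g := fun x : ↥t => f ↑x) _ x⟩

end DCProof
namespace DCProof
open Finset

lemma exists_perm_of_sz_eq {n : ℕ} (σ τ : FP n) (h : sz σ = sz τ) :
    ∃ g : Equiv.Perm (Fin n), τ.parts = σ.parts.image (fun B => B.image g) := by
  classical
  obtain ⟨e, he⟩ := finsetEquivOfMapEq (s := σ.parts) (t := τ.parts) Finset.card h
  -- blockwise equivs
  have hcards : ∀ B : ↥σ.parts, (B : Finset (Fin n)).card = ((e B : Finset (Fin n))).card :=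
    fun B => (he B).symm
  let F : ∀ B : ↥σ.parts, ↥(B : Finset (Fin n)) ≃ ↥((e B : Finset (Fin n))) :=
    fun B => Finset.equivOfCardEq (hcards B)
  let u : Fin n ≃ ↥(univ : Finset (Fin n)) := (Equiv.subtypeUnivEquiv (fun x => mem_univ x)).symm
  let g : Equiv.Perm (Fin n) :=
    (u.trans (σ.equivSigmaParts.trans ((Equiv.sigmaCongr e F).trans
      (τ.equivSigmaParts.symm.trans u.symm))))
  have hg : ∀ (B : Finset (Fin n)) (hB : B ∈ σ.parts) (x : Fin n), x ∈ B →
      g x ∈ ((e ⟨B, hB⟩ : Finset (Fin n))) := by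
    intro B hB x hx
    have hmemuniv : x ∈ (univ : Finset (Fin n)) := mem_univ x
    have hpart : σ.part x = B := σ.part_eq_of_mem hB hx
    have h3 : g x = ((F ⟨σ.part x, σ.part_mem.2 hmemuniv⟩ ⟨x, σ.mem_part_self.2 hmemuniv⟩ : _) : Fin n) := rfl
    rw [h3]
    have hco : (⟨σ.part x, σ.part_mem.2 hmemuniv⟩ : ↥σ.parts) = ⟨B, hB⟩ := Subtype.ext hpart
    have hmem := (F ⟨σ.part x, σ.part_mem.2 hmemuniv⟩ ⟨x, σ.mem_part_self.2 hmemuniv⟩).2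
    rw [← hco]
    exact hmem
  refine ⟨g, ?_⟩
  have himg : ∀ (B : Finset (Fin n)) (hB : B ∈ σ.parts),
      B.image g = (e ⟨B, hB⟩ : Finset (Fin n)) := by
    intro B hB
    apply Finset.eq_of_subset_of_card_le
    · intro y hy
      rw [Finset.mem_image] at hy
      obtain ⟨x, hx, rfl⟩ := hy
      exact hg B hB x hx
    · rw [Finset.card_image_of_injective _ g.injective]
      exact le_of_eq (hcards ⟨B, hB⟩).symm
  ext C
  simp only [Finset.mem_image]
  constructor
  · intro hC
    refine ⟨(e.symm ⟨C, hC⟩ : Finset (Fin n)), (e.symm ⟨C, hC⟩).2, ?_⟩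
    rw [himg _ (e.symm ⟨C, hC⟩).2]
    congr 1
    rw [show (⟨((e.symm ⟨C, hC⟩ : ↥σ.parts) : Finset (Fin n)), (e.symm ⟨C, hC⟩).2⟩ : ↥σ.parts)
      = e.symm ⟨C, hC⟩ from rfl, e.apply_symm_apply]
  · rintro ⟨B, hB, rfl⟩
    rw [himg B hB]
    exact (e ⟨B, hB⟩).2

end DCProof
namespace DCProof
open Finset

noncomputable def SzSet (n : ℕ) : Finset (Multiset ℕ) := univ.image (sz (n := n))

noncomputable def PsiMap (n : ℕ) : ((↥(SzSet n) → ℝ)) →ₗ[ℝ] (FP n → ℝ) where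
  toFun f := fun σ => f ⟨sz σ, Finset.mem_image_of_mem _ (mem_univ σ)⟩
  map_add' f g := rfl
  map_smul' c f := rfl

lemma psiMap_injective (n : ℕ) : Function.Injective (PsiMap n) := by
  intro f f' hff
  funext s
  obtain ⟨σ, _, hσ⟩ := Finset.mem_image.mp s.2
  have := congrFun hff σ
  simp only [PsiMap, LinearMap.coe_mk, AddHom.coe_mk] at this
  have hs : (⟨sz σ, Finset.mem_image_of_mem _ (mem_univ σ)⟩ : ↥(SzSet n)) = s :=
    Subtype.ext hσ
  rwa [hs] at this

lemma range_psiMap (n : ℕ) : LinearMap.range (PsiMap n) = QInv n := by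
  apply le_antisymm
  · rintro q ⟨f, rfl⟩
    intro g σ τ hτ
    show f _ = f _
    congr 1
    exact Subtype.ext (sz_eq_of_image g σ τ hτ)
  · intro q hq
    refine ⟨fun s => q (Finset.mem_image.mp s.2).choose, ?_⟩
    funext σ
    show q _ = q σ
    set σ' := (Finset.mem_image.mp
      (Finset.mem_image_of_mem (sz (n := n)) (mem_univ σ)) ).choose with hσ'def
    have hσ' : sz σ' = sz σ := (Finset.mem_image.mp
      (Finset.mem_image_of_mem (sz (n := n)) (mem_univ σ))).choose_spec.2
    obtain ⟨g, hg⟩ := exists_perm_of_sz_eq σ' σ hσ'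
    exact (hq g σ' σ hg).symm

lemma sz_sum {n : ℕ} (σ : FP n) : (sz σ).sum = n := by
  have h := Finpartition.sum_card_parts σ
  rw [Finset.card_univ, Fintype.card_fin] at h
  exact h

lemma sz_pos {n : ℕ} (σ : FP n) : ∀ x ∈ sz σ, 0 < x := by
  intro x hx
  rw [sz] at hx
  obtain ⟨B, hB, rfl⟩ := Multiset.mem_map.mp hx
  rw [Finset.card_pos]
  exact σ.nonempty_of_mem_parts hB

lemma card_SzSet (n : ℕ) : (SzSet n).card = Fintype.card (Nat.Partition n) := by
  rw [← Fintype.card_coe]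
  apply Fintype.card_of_bijective (f := fun s : ↥(SzSet n) =>
    (⟨s.1, fun {i} hi => by
        obtain ⟨σ, _, hσ⟩ := Finset.mem_image.mp s.2
        exact sz_pos σ i (hσ ▸ hi), by
        obtain ⟨σ, _, hσ⟩ := Finset.mem_image.mp s.2
        rw [← hσ]; exact sz_sum σ⟩ : Nat.Partition n))
  constructor
  · intro s t hst
    exact Subtype.ext (congrArg Nat.Partition.parts hst)
  · intro p
    obtain ⟨P, hP⟩ := exists_finpartition_of_sizes p.parts (univ : Finset (Fin n))
      (fun x hx => p.parts_pos hx)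
      (by rw [Finset.card_univ, Fintype.card_fin]; exact p.parts_sum)
    have hmem : (sz P) ∈ SzSet n := Finset.mem_image_of_mem _ (mem_univ P)
    refine ⟨⟨sz P, hmem⟩, ?_⟩
    apply Nat.Partition.ext
    exact hP

lemma finrank_QInv (n : ℕ) : Module.finrank ℝ ↥(QInv n) = Fintype.card (Nat.Partition n) := by
  rw [← range_psiMap]
  rw [LinearMap.finrank_range_of_inj (psiMap_injective n), Module.finrank_pi,
    Fintype.card_coe, card_SzSet n]

end DCProof
namespace DCProof
open Finset

lemma mem_WSub {n : ℕ} (ν : (Fin n → Bool) → ℝ) :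
    ν ∈ WSub n ↔ (VInvariant ν ∧ ∀ k ≤ n, levelSum ν k = levelSum ν (n - k)) := Iff.rfl

end DCProof


open Finset DCProof


set_option maxHeartbeats 1000000 in
/-- the restriction of `A_{n,1/2}` to the `S_n`-invariant subspace has rank
`⌊n/2⌋ + 1`, nullity `P_n - ⌊n/2⌋ - 1`, and its range is the set of invariant `ν` whose
level sums satisfy `ν_k = ν_{n-k}` for all `k`. -/
theorem rank_range_colorMap_inv_half (n : ℕ) (hn : 1 ≤ n) :
    Module.finrank ℝ
        (LinearMap.range ((colorMap n (1/2)).domRestrict (QInv n))) = n / 2 + 1 ∧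
    Module.finrank ℝ (LinearMap.ker ((colorMap n (1/2)).domRestrict (QInv n))) =
      Fintype.card (Nat.Partition n) - (n / 2 + 1) ∧
    (LinearMap.range ((colorMap n (1/2)).domRestrict (QInv n)) : Set ((Fin n → Bool) → ℝ)) =
      {ν : (Fin n → Bool) → ℝ | VInvariant ν ∧
        ∀ k ≤ n, levelSum ν k = levelSum ν (n - k)} := by
  classical
  set R := LinearMap.range ((colorMap n (1/2)).domRestrict (QInv n)) with hRdef
  have hRW : R ≤ WSub n := by
    rintro ν ⟨q, rfl⟩
    rw [mem_WSub]
    exact ⟨vInvariant_colorMap n (1/2) q.1 q.2,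
      fun k hk => levelSum_colorMap_symm n q.1 k hk⟩
  -- the triangular matrix
  set M : Matrix (Fin (n/2+1)) (Fin (n/2+1)) ℝ :=
    Matrix.of (fun j k : Fin (n/2+1) => lvlMap n ((colorMap n (1/2)) (qgen n (j : ℕ))) k)
    with hMdef
  have hMe : ∀ j k : Fin (n/2+1), M j k
      = levelSum (colorMap n (1/2) (qgen n (j : ℕ))) (k : ℕ) := fun j k => rfl
  have hMtri : ∀ i j : Fin (n/2+1), i < j → M i j = 0 := by
    intro i j hij
    rw [hMe]
    exact E_zero hn (by omega) (by omega) (by exact_mod_cast hij)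
  have hMdiag : ∀ i : Fin (n/2+1), M i i ≠ 0 := by
    intro i
    rw [hMe]
    exact ne_of_gt (E_pos hn (by omega))
  have hdet : M.det ≠ 0 := by
    rw [Matrix.det_of_lowerTriangular M hMtri]
    exact Finset.prod_ne_zero_iff.mpr (fun i _ => hMdiag i)
  have hunit : IsUnit M := (Matrix.isUnit_iff_isUnit_det M).mpr hdet.isUnit
  have hlin : LinearIndependent ℝ (fun j => M j) :=
    Matrix.linearIndependent_rows_iff_isUnit.mpr hunit
  have hspan : Submodule.span ℝ (Set.range fun j => M j) = ⊤ :=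
    hlin.span_eq_top_of_card_eq_finrank (by simp [Module.finrank_pi])
  have hmapR : Submodule.map (lvlMap n) R = ⊤ := by
    refine top_unique ?_
    rw [← hspan]
    apply Submodule.span_le.mpr
    rintro _ ⟨j, rfl⟩
    exact ⟨colorMap n (1/2) (qgen n (j : ℕ)),
      ⟨⟨qgen n (j : ℕ), qgen_mem n (j : ℕ)⟩, rfl⟩, rfl⟩
  have hRge : n/2 + 1 ≤ Module.finrank ℝ R := by
    have h1 := Submodule.finrank_map_le (lvlMap n) R
    rw [hmapR, finrank_top, Module.finrank_pi] at h1
    simpa using h1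
  have hWle : Module.finrank ℝ (WSub n) ≤ n/2 + 1 := by
    have hfinj : Function.Injective ((lvlMap n).comp (WSub n).subtype) := by
      rw [← LinearMap.ker_eq_bot]
      apply LinearMap.ker_eq_bot'.mpr
      intro x hx
      exact Subtype.ext (lvlMap_inj_on_W n x.1 x.2 hx)
    have := LinearMap.finrank_le_finrank_of_injective hfinj
    rwa [Module.finrank_pi, Fintype.card_fin] at this
  have hRle : Module.finrank ℝ R ≤ Module.finrank ℝ (WSub n) := Submodule.finrank_mono hRW
  have hrank : Module.finrank ℝ R = n/2 + 1 := le_antisymm (hRle.trans hWle) hRge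
  have hWrank : Module.finrank ℝ (WSub n) ≤ Module.finrank ℝ R := by omega
  have hReq : R = WSub n := Submodule.eq_of_le_of_finrank_le hRW hWrank
  refine ⟨hrank, ?_, ?_⟩
  · have hrn := LinearMap.finrank_range_add_finrank_ker ((colorMap n (1/2)).domRestrict (QInv n))
    rw [finrank_QInv n] at hrn
    rw [← hRdef] at hrn
    omega
  · rw [hReq]
    rfl
end
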